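/- arXiv:1005.4278 — 2 statements merged into one kernel-verified Lean document; each statement's English description precedes it below -/
import Mathlib

section
/- The toric ideal I_G of a finite simple connected graph G is generated by the binomials B_w, where w ranges over the even closed walks of G. -/
open MvPolynomial

noncomputable section

/-! ### Term orders, initial terms, (reduced) Gröbner bases, universal Gröbner basis -/

/-- A term order on the monomials (exponent vectors) in variables indexed by `σ`:
a linear order for which `0` is least and which is compatible with addition. -/
structure TermOrder (σ : Type*) where
  lo : LinearOrder (σ →₀ ℕ)
  zero_min : ∀ u : σ →₀ ℕ, lo.le 0 u
  add_right : ∀ u v w : σ →₀ ℕ, lo.le u v → lo.le (u + w) (v + w)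

variable {σ : Type*} {K : Type*} [Field K]

/-- The leading (largest) exponent of a polynomial with respect to a term order
(junk value `0` if `f = 0`). -/
def TermOrder.leadExp (t : TermOrder σ) (f : MvPolynomial σ K) : σ →₀ ℕ :=
  haveI := Classical.propDecidable (f = 0)
  if h : f = 0 then 0
  else @Finset.max' _ t.lo f.support
    (Finset.nonempty_iff_ne_empty.mpr fun he => h (MvPolynomial.support_eq_empty.mp he))

/-- The initial term of a polynomial with respect to a term order. -/
def TermOrder.initial (t : TermOrder σ) (f : MvPolynomial σ K) : MvPolynomial σ K :=
  monomial (t.leadExp f) (f.coeff (t.leadExp f))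

/-- `𝒢` is a Gröbner basis of `I` w.r.t. the term order `t`. -/
def IsGroebnerBasis (t : TermOrder σ) (I : Ideal (MvPolynomial σ K))
    (𝒢 : Finset (MvPolynomial σ K)) : Prop :=
  (𝒢 : Set (MvPolynomial σ K)) ⊆ (I : Set (MvPolynomial σ K)) ∧
    Ideal.span (t.initial '' (𝒢 : Set (MvPolynomial σ K))) =
      Ideal.span (t.initial '' (I : Set (MvPolynomial σ K)))

/-- `𝒢` is a reduced Gröbner basis of `I` w.r.t. `t`: a Gröbner basis, all of whose elements
are monic, and no monomial occurring in an element of `𝒢` is divisible by the initial term of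
a different element of `𝒢`. -/
def IsReducedGroebnerBasis (t : TermOrder σ) (I : Ideal (MvPolynomial σ K))
    (𝒢 : Finset (MvPolynomial σ K)) : Prop :=
  IsGroebnerBasis t I 𝒢 ∧
    (∀ g ∈ 𝒢, g.coeff (t.leadExp g) = 1) ∧
    (∀ g ∈ 𝒢, ∀ g' ∈ 𝒢, g' ≠ g → ∀ u ∈ g.support, ¬ t.leadExp g' ≤ u)

/-- The universal Gröbner basis of `I`: the union of all reduced Gröbner bases of `I`
over all term orders. -/
def UniversalGB (I : Ideal (MvPolynomial σ K)) : Set (MvPolynomial σ K) :=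
  {f | ∃ (t : TermOrder σ) (𝒢 : Finset (MvPolynomial σ K)),
    IsReducedGroebnerBasis t I 𝒢 ∧ f ∈ 𝒢}

/-! ### Binomials, primitive binomials (Graver basis), circuits -/

/-- The binomial `x^u - x^v`. -/
def binom (K : Type*) [Field K] {σ : Type*} (u v : σ →₀ ℕ) : MvPolynomial σ K :=
  monomial u 1 - monomial v 1

/-- `f` is a primitive binomial of `I`: `f = x^u - x^v ∈ I` and there is no other binomial
`x^w - x^z ∈ I` with `x^w ∣ x^u` and `x^z ∣ x^v`.  The set of primitive binomials of `I`
is the Graver basis of `I`. -/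
def IsPrimitiveBinomial (I : Ideal (MvPolynomial σ K)) (f : MvPolynomial σ K) : Prop :=
  ∃ u v : σ →₀ ℕ, u ≠ v ∧ f = binom K u v ∧ f ∈ I ∧
    ∀ w z : σ →₀ ℕ, w ≠ z → binom K w z ∈ I → w ≤ u → z ≤ v → w = u ∧ z = v

/-- `f` is a circuit of `I`: an irreducible binomial of `I` whose support (set of variables
occurring in it) is minimal among the supports of nonzero binomials of `I`. -/
def IsCircuitBinomial (I : Ideal (MvPolynomial σ K)) (f : MvPolynomial σ K) : Prop :=
  (∃ u v : σ →₀ ℕ, u ≠ v ∧ f = binom K u v) ∧ f ∈ I ∧ Irreducible f ∧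
    ∀ g : MvPolynomial σ K, (∃ u v : σ →₀ ℕ, u ≠ v ∧ g = binom K u v) → g ∈ I →
      g.vars ⊆ f.vars → g.vars = f.vars

/-- The toric ideal of a vector configuration `A = (a_1, …, a_m) ⊆ ℕ^n`: the ideal generated
by all binomials `x^u - x^v` with `Σ uᵢ aᵢ = Σ vᵢ aᵢ`. -/
def toricIdealOfConfig (K : Type*) [Field K] {m n : ℕ} (A : Fin m → Fin n → ℕ) :
    Ideal (MvPolynomial (Fin m) K) :=
  Ideal.span {f | ∃ u v : Fin m →₀ ℕ,
    f = binom K u v ∧ (∑ i, u i • A i) = ∑ i, v i • A i}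

/-! ### Toric ideals of graphs -/

variable {V : Type*}

/-- The image `x_u * x_v` of an edge `e = {u, v}`. -/
def edgeImage (K : Type*) [Field K] {V : Type*} (e : Sym2 V) : MvPolynomial V K :=
  Sym2.lift ⟨fun a b => X a * X b, fun a b => mul_comm _ _⟩ e

/-- The toric ideal `I_G` of a graph `G`: the kernel of the `K`-algebra map
`K[e : e ∈ E(G)] → K[x_v : v ∈ V(G)]`, `e = {u,v} ↦ x_u x_v`. -/
def graphToricIdeal (K : Type*) [Field K] (G : SimpleGraph V) :
    Ideal (MvPolynomial G.edgeSet K) :=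
  RingHom.ker (MvPolynomial.aeval
    (fun e : G.edgeSet => edgeImage K (e : Sym2 V)) :
      MvPolynomial G.edgeSet K →ₐ[K] MvPolynomial V K).toRingHom

/-- An even closed walk `(v_0, v_1, …, v_{2q} = v_0)` in a graph `G`;
edges and vertices may repeat. -/
structure EvenClosedWalk (G : SimpleGraph V) where
  q : ℕ
  verts : ℕ → V
  adj : ∀ i, i < 2 * q → G.Adj (verts i) (verts (i + 1))
  closed : verts (2 * q) = verts 0

namespace EvenClosedWalk

variable {G : SimpleGraph V}

/-- The `i`-th edge of the walk, as an element of the edge set of `G`. -/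
def edge (w : EvenClosedWalk G) (i : ℕ) (h : i < 2 * w.q) : G.edgeSet :=
  ⟨s(w.verts i, w.verts (i + 1)), w.adj i h⟩

/-- The exponent vector `w⁺` of the monomial `E⁺(w)`, the product of the edges of `w`
in odd position (`1`-indexed). -/
def plusExp (w : EvenClosedWalk G) : G.edgeSet →₀ ℕ :=
  ∑ k : Fin w.q, Finsupp.single (w.edge (2 * (k : ℕ)) (by have := k.isLt; omega)) 1

/-- The exponent vector `w⁻` of the monomial `E⁻(w)`, the product of the edges of `w`
in even position (`1`-indexed). -/
def minusExp (w : EvenClosedWalk G) : G.edgeSet →₀ ℕ :=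
  ∑ k : Fin w.q, Finsupp.single (w.edge (2 * (k : ℕ) + 1) (by have := k.isLt; omega)) 1

end EvenClosedWalk

/-- The monomial `E⁺(w)`. -/
def Eplus (K : Type*) [Field K] {G : SimpleGraph V} (w : EvenClosedWalk G) :
    MvPolynomial G.edgeSet K :=
  monomial w.plusExp 1

/-- The monomial `E⁻(w)`. -/
def Eminus (K : Type*) [Field K] {G : SimpleGraph V} (w : EvenClosedWalk G) :
    MvPolynomial G.edgeSet K :=
  monomial w.minusExp 1

/-- The binomial `B_w = E⁺(w) - E⁻(w)` of an even closed walk. -/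
def Bw (K : Type*) [Field K] {G : SimpleGraph V} (w : EvenClosedWalk G) :
    MvPolynomial G.edgeSet K :=
  binom K w.plusExp w.minusExp

namespace EvenClosedWalk

variable {G : SimpleGraph V}

/-- The number of positions of the walk at which the edge `e` appears. -/
def count [DecidableEq V] (w : EvenClosedWalk G) (e : Sym2 V) : ℕ :=
  ((Finset.range (2 * w.q)).filter fun i => e = s(w.verts i, w.verts (i + 1))).card

/-- The subgraph `𝐰` of `G` spanned by the edges of the walk `w`. -/
def graph (w : EvenClosedWalk G) : SimpleGraph V :=
  SimpleGraph.fromEdgeSet {e | ∃ i, ∃ _ : i < 2 * w.q, e = s(w.verts i, w.verts (i + 1))}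

/-- The set `w⁺` of edges of `w` in odd position (`1`-indexed). -/
def plusEdges (w : EvenClosedWalk G) : Set (Sym2 V) :=
  {e | ∃ k, ∃ _ : k < w.q, e = s(w.verts (2 * k), w.verts (2 * k + 1))}

/-- The set `w⁻` of edges of `w` in even position (`1`-indexed). -/
def minusEdges (w : EvenClosedWalk G) : Set (Sym2 V) :=
  {e | ∃ k, ∃ _ : k < w.q, e = s(w.verts (2 * k + 1), w.verts (2 * k + 2))}

/-- An even closed walk is primitive if it is nontrivial and there is no even closed
subwalk `ξ` of smaller length with `E⁺(ξ) ∣ E⁺(w)` and `E⁻(ξ) ∣ E⁻(w)`. -/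
def IsPrimitive (w : EvenClosedWalk G) : Prop :=
  0 < w.q ∧ ∀ ξ : EvenClosedWalk G, 0 < ξ.q → ξ.q < w.q →
    ¬(ξ.plusExp ≤ w.plusExp ∧ ξ.minusExp ≤ w.minusExp)

/-- The walk `w` is a cycle: it visits no vertex twice. -/
def IsCycle (w : EvenClosedWalk G) : Prop :=
  2 ≤ w.q ∧ ∀ i j, i < 2 * w.q → j < 2 * w.q → w.verts i = w.verts j → i = j

end EvenClosedWalk

/-! ### Cut vertices, cut edges, blocks, sinks -/

/-- `v` is a cut vertex of `H`: removing `v` (and the edges through it) disconnects two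
vertices different from `v` that were connected in `H`. -/
def IsCutVertex (H : SimpleGraph V) (v : V) : Prop :=
  ∃ a b, a ≠ v ∧ b ≠ v ∧ H.Reachable a b ∧
    ¬(SimpleGraph.fromEdgeSet {e | e ∈ H.edgeSet ∧ v ∉ e}).Reachable a b

/-- `e` is a cut edge of `H`: removing it disconnects two vertices connected in `H`. -/
def IsCutEdge (H : SimpleGraph V) (e : Sym2 V) : Prop :=
  e ∈ H.edgeSet ∧ ∃ a b, H.Reachable a b ∧ ¬(H.deleteEdges {e}).Reachable a b

/-- `H` is biconnected: it has an edge, it is connected (on its support),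
and it has no cut vertex. -/
def IsBiconnected (H : SimpleGraph V) : Prop :=
  H.edgeSet.Nonempty ∧ (∀ a ∈ H.support, ∀ b ∈ H.support, H.Reachable a b) ∧
    ∀ v, ¬IsCutVertex H v

/-- `B` is a block of `H`: a maximal biconnected subgraph. -/
def IsBlock (H B : SimpleGraph V) : Prop :=
  B ≤ H ∧ IsBiconnected B ∧ ∀ B', B ≤ B' → B' ≤ H → IsBiconnected B' → B' = B

/-- A graph is a cycle (graph): its edge set is the edge set of a cycle of length `≥ 3`. -/
def IsCycleGraph (B : SimpleGraph V) : Prop :=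
  ∃ (n : ℕ) (f : ℕ → V), 3 ≤ n ∧
    (∀ i j, i < n → j < n → f i = f j → i = j) ∧
    B.edgeSet = {e | ∃ i, ∃ _ : i < n, e = s(f i, f ((i + 1) % n))}

/-- `v` is a sink of the block `B` of the walk `w`: a common vertex of two odd
(or two even) edges of the walk belonging to `B`. -/
def IsSinkOf {G : SimpleGraph V} (w : EvenClosedWalk G) (B : SimpleGraph V) (v : V) : Prop :=
  ∃ e₁ e₂ : Sym2 V, e₁ ≠ e₂ ∧ e₁ ∈ B.edgeSet ∧ e₂ ∈ B.edgeSet ∧ v ∈ e₁ ∧ v ∈ e₂ ∧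
    ((e₁ ∈ w.plusEdges ∧ e₂ ∈ w.plusEdges) ∨ (e₁ ∈ w.minusEdges ∧ e₂ ∈ w.minusEdges))

/-- `B` is a pure cyclic block of the walk `w`: a block of `𝐰` which is a cycle all of whose
edges lie in `w⁺`, or all in `w⁻`. -/
def IsPureCyclicBlock {G : SimpleGraph V} (w : EvenClosedWalk G) (B : SimpleGraph V) : Prop :=
  IsBlock w.graph B ∧ IsCycleGraph B ∧
    (B.edgeSet ⊆ w.plusEdges ∨ B.edgeSet ⊆ w.minusEdges)

/-- A primitive walk is mixed if it has no pure cyclic block. -/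
def EvenClosedWalk.IsMixed {G : SimpleGraph V} (w : EvenClosedWalk G) : Prop :=
  ∀ B : SimpleGraph V, ¬IsPureCyclicBlock w B



/-! ### Auxiliary development for Statement 2 -/

namespace ToricAux

open Finsupp

variable {V : Type*} {K : Type*} [Field K]

/-- The degree finsupp of an unordered pair. -/
def sy2 : Sym2 V → (V →₀ ℕ) :=
  Sym2.lift ⟨fun a b => Finsupp.single a 1 + Finsupp.single b 1, fun a b => add_comm _ _⟩

lemma sy2_mk (a b : V) : sy2 s(a, b) = Finsupp.single a 1 + Finsupp.single b 1 := rfl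

/-- Total vertex-degree vector of a multiset of unordered pairs. -/
def degS : (Sym2 V →₀ ℕ) →ₗ[ℕ] (V →₀ ℕ) := Finsupp.linearCombination ℕ sy2

lemma degS_single (s : Sym2 V) (n : ℕ) : degS (Finsupp.single s n) = n • sy2 s :=
  Finsupp.linearCombination_single ℕ n s

lemma degS_apply (w : Sym2 V →₀ ℕ) (x : V) :
    degS w x = ∑ e ∈ w.support, w e * (sy2 e) x := by
  rw [degS, Finsupp.linearCombination_apply, Finsupp.sum, Finsupp.finset_sum_apply]
  exact Finset.sum_congr rfl fun e _ => by rw [Finsupp.smul_apply, smul_eq_mul]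

lemma mem_of_sy2_ne {s : Sym2 V} {x : V} (h : sy2 s x ≠ 0) : x ∈ s := by
  classical
  induction s using Sym2.inductionOn with
  | hf a b =>
    rw [sy2_mk, Finsupp.add_apply, Finsupp.single_apply, Finsupp.single_apply] at h
    rw [Sym2.mem_iff]
    by_contra hc
    push_neg at hc
    rw [if_neg (fun hh : a = x => hc.1 hh.symm), if_neg (fun hh : b = x => hc.2 hh.symm)] at h
    exact h rfl

lemma one_le_sy2 {s : Sym2 V} {x : V} (h : x ∈ s) : 1 ≤ sy2 s x := by
  induction s using Sym2.inductionOn with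
  | hf a b =>
    rw [Sym2.mem_iff] at h
    rcases h with rfl | rfl <;> simp [sy2_mk, Finsupp.single_apply]

lemma exists_mem_of_degS_ne (w : Sym2 V →₀ ℕ) (x : V) (h : degS w x ≠ 0) :
    ∃ s, w s ≠ 0 ∧ x ∈ s := by
  by_contra hc
  push_neg at hc
  apply h
  rw [degS_apply]
  refine Finset.sum_eq_zero fun e he => ?_
  rcases eq_or_ne (sy2 e x) 0 with h0 | h0
  · rw [h0, mul_zero]
  · exact absurd (mem_of_sy2_ne h0) (hc e (Finsupp.mem_support_iff.mp he))

lemma one_le_degS (w : Sym2 V →₀ ℕ) {s : Sym2 V} (hs : w s ≠ 0) {x : V} (hx : x ∈ s) :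
    1 ≤ degS w x := by
  rw [degS_apply]
  calc (1 : ℕ) ≤ w s * sy2 s x :=
        Nat.one_le_iff_ne_zero.mpr (Nat.mul_ne_zero hs (by have := one_le_sy2 hx; omega))
    _ ≤ _ := Finset.single_le_sum (f := fun e => w e * sy2 e x)
        (fun i _ => Nat.zero_le _) (Finsupp.mem_support_iff.mpr hs)

/-- Total mass of a finsupp. -/
def tot {α : Type*} (u : α →₀ ℕ) : ℕ := u.sum fun _ n => n

lemma tot_add {α : Type*} (u v : α →₀ ℕ) : tot (u + v) = tot u + tot v :=
  Finsupp.sum_add_index' (fun _ => rfl) (fun _ _ _ => rfl)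

lemma tot_single {α : Type*} (a : α) (n : ℕ) : tot (Finsupp.single a n) = n :=
  Finsupp.sum_single_index rfl

lemma one_le_tot {α : Type*} {u : α →₀ ℕ} {a : α} (h : u a ≠ 0) : 1 ≤ tot u := by
  have : u a ≤ tot u := by
    refine Finset.single_le_sum (f := fun a => u a) (fun i _ => Nat.zero_le _)
      (Finsupp.mem_support_iff.mpr h)
  omega

section Graph

variable {G : SimpleGraph V}

/-- Embedding of edge-indexed finsupps into `Sym2 V`-indexed finsupps. -/
def em : (G.edgeSet →₀ ℕ) →+ (Sym2 V →₀ ℕ) :=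
  Finsupp.mapDomain.addMonoidHom Subtype.val

lemma em_def (u : G.edgeSet →₀ ℕ) : em u = Finsupp.mapDomain Subtype.val u := rfl

lemma em_apply (u : G.edgeSet →₀ ℕ) (e : G.edgeSet) : em u (e : Sym2 V) = u e :=
  Finsupp.mapDomain_apply Subtype.val_injective _ _

lemma em_single (e : G.edgeSet) (n : ℕ) :
    em (Finsupp.single e n) = Finsupp.single (e : Sym2 V) n :=
  Finsupp.mapDomain_single

lemma em_le_em {u v : G.edgeSet →₀ ℕ} : em u ≤ em v ↔ u ≤ v := by
  constructor
  · intro h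
    rw [Finsupp.le_def]
    intro e
    have := Finsupp.le_def.mp h (e : Sym2 V)
    rwa [em_apply, em_apply] at this
  · intro h
    have hv : (v - u) + u = v := tsub_add_cancel_of_le h
    calc em u ≤ em (v - u) + em u := le_add_self
      _ = em ((v - u) + u) := (map_add em _ _).symm
      _ = em v := by rw [hv]

lemma exists_edge_of_degS_ne (U : G.edgeSet →₀ ℕ) (x : V)
    (h : degS (em U) x ≠ 0) : ∃ e : G.edgeSet, U e ≠ 0 ∧ x ∈ (e : Sym2 V) := by
  classical
  obtain ⟨s, hs, hx⟩ := exists_mem_of_degS_ne (em U) x h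
  have hs' : s ∈ (em U).support := Finsupp.mem_support_iff.mpr hs
  rw [em_def] at hs'
  obtain ⟨e, he, rfl⟩ := Finset.mem_image.mp (Finsupp.mapDomain_support hs')
  exact ⟨e, Finsupp.mem_support_iff.mp he, hx⟩

/-- The vertex-degree vector of a monomial in the edge variables. -/
def D (u : G.edgeSet →₀ ℕ) : V →₀ ℕ := degS (em u)

lemma D_add (u v : G.edgeSet →₀ ℕ) : D (u + v) = D u + D v := by
  rw [D, D, D, map_add, map_add]

lemma edgeImage_eq_monomial (s : Sym2 V) :
    edgeImage K s = monomial (sy2 s) (1 : K) := by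
  induction s using Sym2.inductionOn with
  | hf a b =>
    have hx : ∀ c : V, (X c : MvPolynomial V K) = monomial (Finsupp.single c 1) 1 := by
      intro c
      rw [← MvPolynomial.X_pow_eq_monomial, pow_one]
    show (X a : MvPolynomial V K) * X b = _
    rw [hx, hx, monomial_mul, one_mul, sy2_mk]

lemma prod_monomial_one {α : Type*} (s : Finset α) (g : α → (V →₀ ℕ)) :
    (∏ i ∈ s, (monomial (g i) (1 : K))) = monomial (∑ i ∈ s, g i) 1 := by
  classical
  induction s using Finset.cons_induction with
  | empty => simp
  | cons a s ha ih =>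
    rw [Finset.prod_cons, Finset.sum_cons, ih, monomial_mul, one_mul]

lemma aeval_monomial_eq (m : G.edgeSet →₀ ℕ) (c : K) :
    aeval (fun e : G.edgeSet => edgeImage K (e : Sym2 V)) (monomial m c) =
      monomial (D m) c := by
  rw [MvPolynomial.aeval_monomial]
  have h1 : (m.prod fun e k => (edgeImage K (e : Sym2 V)) ^ k) = monomial (D m) (1 : K) := by
    rw [Finsupp.prod]
    rw [Finset.prod_congr rfl (fun e (_ : e ∈ m.support) => by
      rw [edgeImage_eq_monomial, monomial_pow, one_pow])]
    rw [prod_monomial_one]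
    congr 1
    rw [D, em_def, degS, Finsupp.linearCombination_mapDomain,
      Finsupp.linearCombination_apply, Finsupp.sum]
    rfl
  rw [h1, MvPolynomial.algebraMap_eq, C_mul_monomial, mul_one]

lemma sum_range_two_mul {M : Type*} [AddCommMonoid M] (q : ℕ) (g : ℕ → M) :
    ∑ i ∈ Finset.range (2 * q), g i = ∑ k ∈ Finset.range q, (g (2 * k) + g (2 * k + 1)) := by
  induction q with
  | zero => simp
  | succ q ih =>
    rw [show 2 * (q + 1) = 2 * q + 1 + 1 by ring, Finset.sum_range_succ, Finset.sum_range_succ,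
      ih, Finset.sum_range_succ, add_assoc]

lemma em_plusExp (w : EvenClosedWalk G) :
    em w.plusExp =
      ∑ k ∈ Finset.range w.q, Finsupp.single s(w.verts (2 * k), w.verts (2 * k + 1)) 1 := by
  rw [EvenClosedWalk.plusExp, map_sum]
  rw [← Fin.sum_univ_eq_sum_range
    (fun k => (Finsupp.single s(w.verts (2 * k), w.verts (2 * k + 1)) 1 : Sym2 V →₀ ℕ)) w.q]
  exact Finset.sum_congr rfl fun k _ => em_single _ _

lemma em_minusExp (w : EvenClosedWalk G) :
    em w.minusExp =
      ∑ k ∈ Finset.range w.q, Finsupp.single s(w.verts (2 * k + 1), w.verts (2 * k + 2)) 1 := by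
  rw [EvenClosedWalk.minusExp, map_sum]
  rw [← Fin.sum_univ_eq_sum_range
    (fun k => (Finsupp.single s(w.verts (2 * k + 1), w.verts (2 * k + 2)) 1 : Sym2 V →₀ ℕ)) w.q]
  exact Finset.sum_congr rfl fun k _ => em_single _ _

lemma D_plusExp_eq (w : EvenClosedWalk G) : D w.plusExp = D w.minusExp := by
  have key : ∀ i : ℕ, (fun i => (Finsupp.single (w.verts i) 1 : V →₀ ℕ)) =
      (fun i => (Finsupp.single (w.verts i) 1 : V →₀ ℕ)) := fun _ => rfl
  set g : ℕ → (V →₀ ℕ) := fun i => Finsupp.single (w.verts i) 1 with hg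
  rw [D, D, em_plusExp, em_minusExp, map_sum, map_sum]
  have h1 : ∀ k : ℕ, degS (Finsupp.single s(w.verts (2 * k), w.verts (2 * k + 1)) (1:ℕ)) =
      g (2 * k) + g (2 * k + 1) := fun k => by
    rw [degS_single, one_smul, sy2_mk]
  have h2 : ∀ k : ℕ, degS (Finsupp.single s(w.verts (2 * k + 1), w.verts (2 * k + 2)) (1:ℕ)) =
      g (2 * k + 1) + g (2 * k + 1 + 1) := fun k => by
    rw [degS_single, one_smul, sy2_mk]
  rw [Finset.sum_congr rfl fun k _ => h1 k, Finset.sum_congr rfl fun k _ => h2 k]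
  rw [← sum_range_two_mul w.q g, ← sum_range_two_mul w.q (fun i => g (i + 1))]
  have e1 : ∑ i ∈ Finset.range (2 * w.q), g (i + 1) + g 0 = ∑ i ∈ Finset.range (2 * w.q), g i + g 0 := by
    rw [← Finset.sum_range_succ' g (2 * w.q), Finset.sum_range_succ g (2 * w.q)]
    have : g (2 * w.q) = g 0 := by rw [hg]; simp [w.closed]
    rw [this]
  exact (add_right_cancel e1).symm

lemma aeval_Bw (w : EvenClosedWalk G) :
    aeval (fun e : G.edgeSet => edgeImage K (e : Sym2 V)) (Bw K w) = 0 := by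
  rw [Bw, binom, map_sub, aeval_monomial_eq, aeval_monomial_eq, D_plusExp_eq, sub_self]

end Graph

end ToricAux

namespace ToricAux

open Finsupp

variable {V : Type*} {K : Type*} [Field K] {G : SimpleGraph V}

/-- Core recursion: from an "odd state" (one spare endpoint at `a0` and one at `b`),
extract an alternating path from `b` to `a0` starting with a `Vv`-edge. -/
lemma walkRec : ∀ (n : ℕ) (U Vv : G.edgeSet →₀ ℕ) (a0 b : V),
    tot U + tot Vv ≤ n →
    degS (em Vv) = degS (em U) + Finsupp.single a0 1 + Finsupp.single b 1 →
    ∃ (m : ℕ) (f : ℕ → V), f 0 = b ∧ f (2 * m + 1) = a0 ∧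
      (∀ i, i < 2 * m + 1 → G.Adj (f i) (f (i + 1))) ∧
      (∑ k ∈ Finset.range m, Finsupp.single s(f (2 * k + 1), f (2 * k + 2)) 1) ≤ em U ∧
      (∑ k ∈ Finset.range (m + 1), Finsupp.single s(f (2 * k), f (2 * k + 1)) 1) ≤ em Vv := by
  intro n
  induction n using Nat.strong_induction_on with
  | _ n ih =>
  intro U Vv a0 b hn hinv
  classical
  -- a `Vv`-edge at `b`
  have hb : degS (em Vv) b ≠ 0 := by
    rw [hinv]
    simp only [Finsupp.add_apply, Finsupp.single_eq_same]
    omega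
  obtain ⟨eV, heV, hbeV⟩ := exists_edge_of_degS_ne Vv b hb
  set c : V := Sym2.Mem.other hbeV with hc_def
  have hspecV : s(b, c) = (eV : Sym2 V) := Sym2.other_spec hbeV
  have hAdjbc : G.Adj b c := (G.mem_edgeSet).mp (hspecV ▸ eV.2)
  have h1V : Finsupp.single eV 1 ≤ Vv := Finsupp.single_le_iff.mpr (Nat.one_le_iff_ne_zero.mpr heV)
  set Vv' := Vv - Finsupp.single eV 1 with hVv'
  have hVsplit : Vv' + Finsupp.single eV 1 = Vv := tsub_add_cancel_of_le h1V
  have hdegV : degS (em Vv) = degS (em Vv') + Finsupp.single b 1 + Finsupp.single c 1 := by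
    rw [← hVsplit, map_add, map_add, em_single, degS_single, one_smul, ← hspecV, sy2_mk,
      add_assoc]
  have hinv2 : degS (em Vv') + Finsupp.single c 1 = degS (em U) + Finsupp.single a0 1 := by
    apply add_right_cancel (b := Finsupp.single b (1:ℕ))
    rw [show degS (em Vv') + Finsupp.single c 1 + Finsupp.single b 1
        = degS (em Vv') + Finsupp.single b 1 + Finsupp.single c 1 by abel, ← hdegV, hinv]
  by_cases hca : c = a0
  · -- close the path
    refine ⟨0, fun i => if i = 0 then b else a0, rfl, rfl, ?_, ?_, ?_⟩
    · intro i hi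
      have hi0 : i = 0 := by omega
      subst hi0
      show G.Adj b a0
      rw [← hca]
      exact hAdjbc
    · rw [Finset.sum_range_zero]
      exact zero_le
    · rw [Finset.sum_range_one]
      have hsb : s((fun i => if i = 0 then b else a0) (2 * 0),
          (fun i => if i = 0 then b else a0) (2 * 0 + 1)) = (eV : Sym2 V) := by
        show s(b, a0) = (eV : Sym2 V)
        rw [← hca]
        exact hspecV
      rw [hsb, ← em_single eV 1]
      exact em_le_em.mpr h1V
  · -- a `U`-edge at `c`
    have hcdeg : degS (em U) c ≠ 0 := by
      have h5 := DFunLike.congr_fun hinv2 c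
      rw [Finsupp.add_apply, Finsupp.add_apply, Finsupp.single_eq_same,
        Finsupp.single_apply, if_neg (fun hh : a0 = c => hca hh.symm)] at h5
      omega
    obtain ⟨eU, heU, hceU⟩ := exists_edge_of_degS_ne U c hcdeg
    set d : V := Sym2.Mem.other hceU with hd_def
    have hspecU : s(c, d) = (eU : Sym2 V) := Sym2.other_spec hceU
    have hAdjcd : G.Adj c d := (G.mem_edgeSet).mp (hspecU ▸ eU.2)
    have h1U : Finsupp.single eU 1 ≤ U := Finsupp.single_le_iff.mpr (Nat.one_le_iff_ne_zero.mpr heU)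
    set U' := U - Finsupp.single eU 1 with hU'
    have hUsplit : U' + Finsupp.single eU 1 = U := tsub_add_cancel_of_le h1U
    have hdegU : degS (em U) = degS (em U') + Finsupp.single c 1 + Finsupp.single d 1 := by
      rw [← hUsplit, map_add, map_add, em_single, degS_single, one_smul, ← hspecU, sy2_mk,
        add_assoc]
    have hinv3 : degS (em Vv') = degS (em U') + Finsupp.single a0 1 + Finsupp.single d 1 := by
      apply add_right_cancel (b := Finsupp.single c (1:ℕ))
      rw [hinv2, hdegU]
      abel
    have htot : tot U' + tot Vv' < n := by
      have h1 : tot U = tot U' + 1 := by rw [← hUsplit, tot_add, tot_single]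
      have h2 : tot Vv = tot Vv' + 1 := by rw [← hVsplit, tot_add, tot_single]
      omega
    obtain ⟨m', f', hf0, hfl, hadj, hP, hQ⟩ :=
      ih (tot U' + tot Vv') htot U' Vv' a0 d le_rfl hinv3
    set f : ℕ → V := fun i => if i = 0 then b else if i = 1 then c else f' (i - 2) with hf
    have hfv : ∀ j, f (j + 2) = f' j := by
      intro j
      simp only [hf]
      rw [if_neg (by omega), if_neg (by omega)]
      congr 1
    have hf0' : f 0 = b := rfl
    have hf1 : f 1 = c := rfl
    refine ⟨m' + 1, f, rfl, ?_, ?_, ?_, ?_⟩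
    · rw [show 2 * (m' + 1) + 1 = (2 * m' + 1) + 2 by ring, hfv]
      exact hfl
    · intro i hi
      match i with
      | 0 => rw [hf0', hf1]; exact hAdjbc
      | 1 => rw [hf1, show (1:ℕ) + 1 = 0 + 2 from rfl, hfv, hf0]; exact hAdjcd
      | (j + 2) =>
        rw [hfv, show j + 2 + 1 = (j + 1) + 2 by ring, hfv]
        exact hadj j (by omega)
    · rw [Finset.sum_range_succ']
      have hterm : ∀ k ∈ Finset.range m',
          (Finsupp.single s(f (2 * (k + 1) + 1), f (2 * (k + 1) + 2)) (1:ℕ))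
            = Finsupp.single s(f' (2 * k + 1), f' (2 * k + 2)) 1 := by
        intro k _
        rw [show 2 * (k + 1) + 1 = (2 * k + 1) + 2 by ring,
          show 2 * (k + 1) + 2 = (2 * k + 2) + 2 by ring, hfv, hfv]
      rw [Finset.sum_congr rfl hterm]
      have h2 : f (2 * 0 + 1) = c := hf1
      have h3 : f (2 * 0 + 2) = d := by rw [show 2 * 0 + 2 = 0 + 2 from rfl, hfv, hf0]
      rw [h2, h3, hspecU, ← em_single eU 1, ← hUsplit, map_add]
      exact add_le_add hP le_rfl
    · rw [Finset.sum_range_succ']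
      have hterm : ∀ k ∈ Finset.range (m' + 1),
          (Finsupp.single s(f (2 * (k + 1)), f (2 * (k + 1) + 1)) (1:ℕ))
            = Finsupp.single s(f' (2 * k), f' (2 * k + 1)) 1 := by
        intro k _
        rw [show 2 * (k + 1) = (2 * k) + 2 by ring,
          show 2 * k + 2 + 1 = (2 * k + 1) + 2 by ring, hfv, hfv]
      rw [Finset.sum_congr rfl hterm]
      have h2 : f (2 * 0) = b := hf0'
      have h3 : f (2 * 0 + 1) = c := hf1
      rw [h2, h3, hspecV, ← em_single eV 1, ← hVsplit, map_add]
      exact add_le_add hQ le_rfl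

end ToricAux

namespace ToricAux

open Finsupp

variable {V : Type*} {K : Type*} [Field K] {G : SimpleGraph V}

/-- Every binomial in the toric ideal lies in the span of the walk binomials. -/
lemma binom_mem_span : ∀ (n : ℕ) (u v : G.edgeSet →₀ ℕ), tot u + tot v ≤ n → D u = D v →
    binom K u v ∈
      Ideal.span {f : MvPolynomial G.edgeSet K | ∃ w : EvenClosedWalk G, f = Bw K w} := by
  intro n
  induction n using Nat.strong_induction_on with
  | _ n ih =>
  intro u v hn hD
  classical
  by_cases hu : u = 0
  · have hv : v = 0 := by
      by_contra hv
      obtain ⟨e, he⟩ := Finsupp.ne_iff.mp hv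
      rw [Finsupp.coe_zero, Pi.zero_apply] at he
      have hmem : (e : Sym2 V).out.1 ∈ (e : Sym2 V) := Sym2.out_fst_mem _
      have h1 : 1 ≤ degS (em v) ((e : Sym2 V).out.1) :=
        one_le_degS (em v) (by rw [em_apply]; exact he) hmem
      rw [hu] at hD
      have : D v = 0 := by rw [← hD, D, map_zero, map_zero]
      rw [D] at this
      rw [this] at h1
      simp at h1
    rw [hu, hv, binom, sub_self]
    exact Ideal.zero_mem _
  · obtain ⟨e, he⟩ := Finsupp.ne_iff.mp hu
    rw [Finsupp.coe_zero, Pi.zero_apply] at he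
    have ha0mem : (e : Sym2 V).out.1 ∈ (e : Sym2 V) := Sym2.out_fst_mem _
    set a0 : V := (e : Sym2 V).out.1
    set b : V := Sym2.Mem.other ha0mem with hb_def
    have hspec : s(a0, b) = (e : Sym2 V) := Sym2.other_spec ha0mem
    have hAdj : G.Adj a0 b := (G.mem_edgeSet).mp (hspec ▸ e.2)
    have h1e : Finsupp.single e 1 ≤ u := Finsupp.single_le_iff.mpr (Nat.one_le_iff_ne_zero.mpr he)
    set u' := u - Finsupp.single e 1 with hu'
    have hsplit : u' + Finsupp.single e 1 = u := tsub_add_cancel_of_le h1e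
    have hinv : degS (em v) = degS (em u') + Finsupp.single a0 1 + Finsupp.single b 1 := by
      have : D u = degS (em u') + Finsupp.single a0 1 + Finsupp.single b 1 := by
        rw [D, ← hsplit, map_add, map_add, em_single, degS_single, one_smul, ← hspec, sy2_mk,
          add_assoc]
      show D v = _
      rw [← hD]
      exact this
    obtain ⟨m, f, hf0, hfl, hadj, hP, hQ⟩ :=
      walkRec (tot u' + tot v) u' v a0 b le_rfl hinv
    set w : EvenClosedWalk G :=
      { q := m + 1
        verts := fun i => if i = 0 then a0 else f (i - 1)
        adj := by
          intro i hi
          match i with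
          | 0 =>
            show G.Adj a0 (f 0)
            rw [hf0]; exact hAdj
          | (j + 1) =>
            show G.Adj (f j) (f (j + 1))
            exact hadj j (by omega)
        closed := by
          show f (2 * (m + 1) - 1) = a0
          rw [show 2 * (m + 1) - 1 = 2 * m + 1 by omega]
          exact hfl } with hw
    have hverts0 : w.verts 0 = a0 := rfl
    have hvertsS : ∀ j, w.verts (j + 1) = f j := fun j => rfl
    have hP' : w.plusExp ≤ u := by
      rw [← em_le_em, em_plusExp]
      show (∑ k ∈ Finset.range (m + 1),
        Finsupp.single s(w.verts (2 * k), w.verts (2 * k + 1)) 1) ≤ em u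
      rw [Finset.sum_range_succ']
      have hterm : ∀ k ∈ Finset.range m,
          (Finsupp.single s(w.verts (2 * (k + 1)), w.verts (2 * (k + 1) + 1)) (1:ℕ))
            = Finsupp.single s(f (2 * k + 1), f (2 * k + 2)) 1 := by
        intro k _
        rw [show 2 * (k + 1) = (2 * k + 1) + 1 by ring,
          show (2 * k + 1) + 1 + 1 = (2 * k + 2) + 1 by ring, hvertsS, hvertsS]
      rw [Finset.sum_congr rfl hterm]
      have h2 : w.verts (2 * 0) = a0 := rfl
      have h3 : w.verts (2 * 0 + 1) = b := by rw [show 2 * 0 + 1 = 0 + 1 from rfl, hvertsS, hf0]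
      rw [h2, h3, hspec, ← em_single e 1, ← hsplit, map_add]
      exact add_le_add hP le_rfl
    have hQ' : w.minusExp ≤ v := by
      rw [← em_le_em, em_minusExp]
      show (∑ k ∈ Finset.range (m + 1),
        Finsupp.single s(w.verts (2 * k + 1), w.verts (2 * k + 2)) 1) ≤ em v
      have hterm : ∀ k ∈ Finset.range (m + 1),
          (Finsupp.single s(w.verts (2 * k + 1), w.verts (2 * k + 2)) (1:ℕ))
            = Finsupp.single s(f (2 * k), f (2 * k + 1)) 1 := by
        intro k _
        rw [show 2 * k + 1 = (2 * k) + 1 from rfl,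
          show 2 * k + 1 + 1 = (2 * k + 1) + 1 from rfl, hvertsS, hvertsS]
      rw [Finset.sum_congr rfl hterm]
      exact hQ
    set p := w.plusExp with hp
    set q' := w.minusExp with hq'
    have hpsplit : (u - p) + p = u := tsub_add_cancel_of_le hP'
    have hqsplit : (v - q') + q' = v := tsub_add_cancel_of_le hQ'
    have hDpq : D p = D q' := D_plusExp_eq w
    have hBw : Bw K w ∈
        Ideal.span {f : MvPolynomial G.edgeSet K | ∃ w : EvenClosedWalk G, f = Bw K w} :=
      Ideal.subset_span ⟨w, rfl⟩
    have hq : w.q = m + 1 := rfl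
    have h0q : 0 < 2 * w.q := by rw [hq]; omega
    have h1q : 1 < 2 * w.q := by rw [hq]; omega
    have htotp : 1 ≤ tot p := by
      have hple : Finsupp.single (w.edge 0 h0q) 1 ≤ p := by
        rw [hp, EvenClosedWalk.plusExp]
        have := Finset.single_le_sum
          (f := fun k : Fin w.q =>
            (Finsupp.single (w.edge (2 * (k : ℕ)) (by have := k.isLt; omega)) 1 : G.edgeSet →₀ ℕ))
          (fun i _ => zero_le) (Finset.mem_univ (⟨0, by rw [hq]; omega⟩ : Fin w.q))
        exact this
      have := Finsupp.le_def.mp hple (w.edge 0 h0q)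
      rw [Finsupp.single_eq_same] at this
      exact one_le_tot (u := p) (a := w.edge 0 h0q) (by omega)
    have htotq : 1 ≤ tot q' := by
      have hple : Finsupp.single (w.edge 1 h1q) 1 ≤ q' := by
        rw [hq', EvenClosedWalk.minusExp]
        have := Finset.single_le_sum
          (f := fun k : Fin w.q =>
            (Finsupp.single (w.edge (2 * (k : ℕ) + 1) (by have := k.isLt; omega)) 1 :
              G.edgeSet →₀ ℕ))
          (fun i _ => zero_le) (Finset.mem_univ (⟨0, by rw [hq]; omega⟩ : Fin w.q))
        exact this
      have := Finsupp.le_def.mp hple (w.edge 1 h1q)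
      rw [Finsupp.single_eq_same] at this
      exact one_le_tot (u := q') (a := w.edge 1 h1q) (by omega)
    have hrest : binom K (u - p) (v - q') ∈
        Ideal.span {f : MvPolynomial G.edgeSet K | ∃ w : EvenClosedWalk G, f = Bw K w} := by
      apply ih (tot (u - p) + tot (v - q')) ?_ _ _ le_rfl ?_
      · have h1 : tot (u - p) + tot p = tot u := by rw [← tot_add, hpsplit]
        have h2 : tot (v - q') + tot q' = tot v := by rw [← tot_add, hqsplit]
        omega
      · have h1 : D (u - p) + D p = D v := by rw [← D_add, hpsplit, hD]
        have h2 : D (v - q') + D q' = D v := by rw [← D_add, hqsplit]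
        rw [hDpq] at h1
        exact add_right_cancel (h1.trans h2.symm)
    have key : binom K u v =
        monomial (u - p) 1 * Bw K w + monomial q' 1 * binom K (u - p) (v - q') := by
      rw [binom, Bw, binom, binom, mul_sub, mul_sub, monomial_mul, monomial_mul, monomial_mul,
        monomial_mul, one_mul, hpsplit, add_comm q' (v - q'), hqsplit, add_comm q' (u - p)]
      ring
    rw [key]
    exact add_mem (Ideal.mul_mem_left _ _ hBw) (Ideal.mul_mem_left _ _ hrest)

/-- The kernel is contained in the span of the walk binomials. -/
lemma ker_le_span : ∀ (n : ℕ) (f : MvPolynomial G.edgeSet K), f.support.card ≤ n →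
    aeval (fun e : G.edgeSet => edgeImage K (e : Sym2 V)) f = 0 →
    f ∈ Ideal.span {f : MvPolynomial G.edgeSet K | ∃ w : EvenClosedWalk G, f = Bw K w} := by
  intro n
  induction n with
  | zero =>
    intro f hf _
    have : f = 0 := MvPolynomial.support_eq_empty.mp
      (Finset.card_eq_zero.mp (le_antisymm hf (Nat.zero_le _)))
    rw [this]; exact Ideal.zero_mem _
  | succ n ihn =>
    intro f hf h0
    classical
    by_cases hfz : f = 0
    · rw [hfz]; exact Ideal.zero_mem _
    · obtain ⟨u, hu⟩ := (MvPolynomial.support_nonempty.mpr hfz)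
      have h1 : aeval (fun e : G.edgeSet => edgeImage K (e : Sym2 V)) f
          = ∑ m ∈ f.support, monomial (D m) (coeff m f) := by
        conv_lhs => rw [MvPolynomial.as_sum f]
        rw [map_sum]
        exact Finset.sum_congr rfl fun m _ => aeval_monomial_eq m (coeff m f)
      have hcoeff : ∑ m ∈ f.support, (if D m = D u then coeff m f else 0) = 0 := by
        have h2 := congrArg (coeff (D u)) (h1.symm.trans h0)
        rw [MvPolynomial.coeff_sum, MvPolynomial.coeff_zero] at h2
        have h3 : (∑ m ∈ f.support, if D m = D u then coeff m f else 0)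
            = ∑ x ∈ f.support, coeff (D u) ((monomial (D x)) (coeff x f)) :=
          Finset.sum_congr rfl fun m _ => by rw [MvPolynomial.coeff_monomial]
        rw [h3, h2]
      have hex : ∃ v' ∈ f.support, v' ≠ u ∧ D v' = D u := by
        by_contra hno
        push_neg at hno
        have heq : ∑ m ∈ f.support, (if D m = D u then coeff m f else 0) = coeff u f := by
          rw [Finset.sum_eq_single_of_mem
            (f := fun m => if D m = D u then coeff m f else 0) u hu
            (fun b hb hbu => if_neg (hno b hb hbu)), if_pos rfl]
        rw [hcoeff] at heq
        exact (MvPolynomial.mem_support_iff.mp hu) heq.symm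
      obtain ⟨v', hv'm, hv'u, hDv⟩ := hex
      set c := coeff u f with hc
      set g := f - C c * binom K u v' with hg
      have hCbin : C c * binom K u v' = monomial u c - monomial v' c := by
        rw [binom, mul_sub, C_mul_monomial, C_mul_monomial, mul_one]
      have hg0 : aeval (fun e : G.edgeSet => edgeImage K (e : Sym2 V)) g = 0 := by
        rw [hg, map_sub, h0, binom, map_mul, map_sub, aeval_monomial_eq, aeval_monomial_eq,
          hDv, sub_self, mul_zero, zero_sub, neg_zero]
      have hcoeffg : ∀ m, coeff m g =
          coeff m f - (if u = m then c else 0) + (if v' = m then c else 0) := by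
        intro m
        rw [hg, MvPolynomial.coeff_sub, hCbin, MvPolynomial.coeff_sub,
          MvPolynomial.coeff_monomial, MvPolynomial.coeff_monomial]
        ring
      have hsupp : g.support ⊆ f.support.erase u := by
        intro m hm
        rw [Finset.mem_erase]
        have hmne : coeff m g ≠ 0 := MvPolynomial.mem_support_iff.mp hm
        constructor
        · rintro rfl
          rw [hcoeffg, if_pos rfl, if_neg hv'u] at hmne
          simp [hc] at hmne
        · rw [MvPolynomial.mem_support_iff]
          intro hmf
          rcases eq_or_ne v' m with rfl | hvm
          · exact (MvPolynomial.mem_support_iff.mp hv'm) hmf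
          · rcases eq_or_ne u m with rfl | hum
            · exact (MvPolynomial.mem_support_iff.mp hu) hmf
            · rw [hcoeffg, hmf, if_neg hum, if_neg hvm] at hmne
              simp at hmne
      have hcard : g.support.card ≤ n := by
        have h1 := Finset.card_le_card hsupp
        have h2 := Finset.card_erase_of_mem hu
        omega
      have hgspan := ihn g hcard hg0
      have hbin := binom_mem_span (G := G) (K := K) (tot u + tot v') u v' le_rfl hDv.symm
      have hfeq : f = g + C c * binom K u v' := by rw [hg]; ring
      rw [hfeq]
      exact add_mem hgspan (Ideal.mul_mem_left _ _ hbin)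

end ToricAux

/-- The toric ideal `I_G` of a finite simple connected graph `G` is generated
by the binomials `B_w`, `w` an even closed walk of `G`. -/
theorem graphToricIdeal_eq_span_Bw {V : Type*} [Fintype V] (G : SimpleGraph V)
    (hG : G.Connected) (K : Type*) [Field K] :
    graphToricIdeal K G =
      Ideal.span {f : MvPolynomial G.edgeSet K | ∃ w : EvenClosedWalk G, f = Bw K w} := by
  classical
  apply le_antisymm
  · intro f hf
    have h0 : aeval (fun e : G.edgeSet => edgeImage K (e : Sym2 V)) f = 0 :=
      RingHom.mem_ker.mp hf
    exact ToricAux.ker_le_span f.support.card f le_rfl h0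
  · rw [Ideal.span_le]
    rintro f ⟨w, rfl⟩
    exact RingHom.mem_ker.mpr (ToricAux.aeval_Bw w)

end
end

section
/- Let G be a finite simple connected graph with m vertices, m ≥ 4. Then every binomial in the universal Gröbner basis of the toric ideal I_G has total degree at most m − 2. -/
open MvPolynomial

noncomputable section

variable {σ : Type*} {K : Type*} [Field K]

/-! ### Toric ideals of graphs -/

variable {V : Type*}

/-! ### Auxiliary development -/

namespace UGBAux

open Finsupp

section Order

variable {σ : Type*} {K : Type*} [Field K]

lemma _root_.TermOrder.lo_le_of_le (t : TermOrder σ) {a b : σ →₀ ℕ} (h : a ≤ b) :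
    t.lo.le a b := by
  obtain ⟨c, rfl⟩ := le_iff_exists_add.mp h
  have := t.add_right 0 c a (t.zero_min c)
  rwa [zero_add, add_comm c a] at this

lemma _root_.TermOrder.leadExp_mem (t : TermOrder σ) {f : MvPolynomial σ K} (hf : f ≠ 0) :
    t.leadExp f ∈ f.support := by
  classical
  rw [TermOrder.leadExp, dif_neg hf]
  exact @Finset.max'_mem _ t.lo _ _

lemma _root_.TermOrder.lo_le_leadExp (t : TermOrder σ) {f : MvPolynomial σ K} {w : σ →₀ ℕ}
    (hw : w ∈ f.support) : t.lo.le w (t.leadExp f) := by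
  classical
  have hf : f ≠ 0 := by
    intro h; rw [h, MvPolynomial.support_zero] at hw; exact absurd hw (Finset.notMem_empty _)
  rw [TermOrder.leadExp, dif_neg hf]
  exact @Finset.le_max' _ t.lo _ _ hw

lemma _root_.TermOrder.eq_leadExp_of_le (t : TermOrder σ) {f : MvPolynomial σ K} {w : σ →₀ ℕ}
    (hw : w ∈ f.support) (h : t.leadExp f ≤ w) : w = t.leadExp f :=
  t.lo.le_antisymm _ _ (t.lo_le_leadExp hw) (t.lo_le_of_le h)

end Order

end UGBAux
section Deg

open Finsupp

variable {V : Type*}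

/-- The degree vector of an edge: one at each endpoint. -/
def endVec (e : Sym2 V) : V →₀ ℕ :=
  Sym2.lift ⟨fun a b => Finsupp.single a 1 + Finsupp.single b 1,
    fun a b => add_comm _ _⟩ e

lemma endVec_mk (a b : V) : endVec s(a, b) = Finsupp.single a 1 + Finsupp.single b 1 := rfl

lemma endVec_apply [DecidableEq V] (a b y : V) :
    endVec s(a, b) y = (if a = y then 1 else 0) + (if b = y then 1 else 0) := by
  simp [endVec_mk, Finsupp.single_apply]

lemma endVec_apply_ne_zero {e : Sym2 V} {y : V} (h : endVec e y ≠ 0) : y ∈ e := by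
  classical
  induction e using Sym2.ind with
  | _ a b =>
    rw [endVec_apply] at h
    rcases eq_or_ne a y with rfl | ha
    · exact Sym2.mem_mk_left _ _
    · rcases eq_or_ne b y with rfl | hb
      · exact Sym2.mem_mk_right _ _
      · simp [ha, hb] at h

lemma endVec_sum (e : Sym2 V) : (endVec e).sum (fun _ n => n) = 2 := by
  classical
  induction e using Sym2.ind with
  | _ a b =>
    rw [endVec_mk, Finsupp.sum_add_index' (by simp) (by intros; rfl)]
    simp

variable {G : SimpleGraph V}

/-- The vertex-degree vector of a multiset of edges. -/
def degVec (w : G.edgeSet →₀ ℕ) : V →₀ ℕ :=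
  w.sum fun e n => n • endVec (e : Sym2 V)

lemma degVec_zero : degVec (0 : G.edgeSet →₀ ℕ) = 0 := Finsupp.sum_zero_index

lemma degVec_add (a b : G.edgeSet →₀ ℕ) : degVec (a + b) = degVec a + degVec b :=
  Finsupp.sum_add_index' (by simp) (by intros; rw [add_smul])

lemma degVec_single (e : G.edgeSet) (n : ℕ) :
    degVec (Finsupp.single e n) = n • endVec (e : Sym2 V) :=
  Finsupp.sum_single_index (by simp)

/-- Total mass (number of edges counted with multiplicity). -/
def mass (w : G.edgeSet →₀ ℕ) : ℕ := w.sum fun _ n => n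

lemma mass_zero : mass (0 : G.edgeSet →₀ ℕ) = 0 := Finsupp.sum_zero_index

lemma mass_add (a b : G.edgeSet →₀ ℕ) : mass (a + b) = mass a + mass b :=
  Finsupp.sum_add_index' (by simp) (by intros; rfl)

lemma mass_single (e : G.edgeSet) (n : ℕ) : mass (Finsupp.single e n) = n :=
  Finsupp.sum_single_index rfl

lemma mass_mono {a b : G.edgeSet →₀ ℕ} (h : a ≤ b) : mass a ≤ mass b := by
  obtain ⟨c, rfl⟩ := le_iff_exists_add.mp h
  rw [mass_add]; omega

lemma mass_eq_zero {a : G.edgeSet →₀ ℕ} (h : mass a = 0) : a = 0 := by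
  have h' : ∀ e ∈ a.support, a e = 0 := by
    rw [mass, Finsupp.sum] at h
    intro e he
    exact (Finset.sum_eq_zero_iff.mp h) e he
  ext e
  by_cases hm : e ∈ a.support
  · simp [h' e hm]
  · simp [Finsupp.notMem_support_iff.mp hm]

lemma sum_degVec (w : G.edgeSet →₀ ℕ) : (degVec w).sum (fun _ n => n) = 2 * mass w := by
  induction w using Finsupp.induction with
  | zero => simp [degVec_zero, mass_zero]
  | single_add e n f _ _ ih =>
    rw [degVec_add, mass_add, Finsupp.sum_add_index' (by simp) (by intros; rfl), ih,
      degVec_single, mass_single]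
    have : ((n • endVec (e : Sym2 V)).sum fun _ k => k) = n * 2 := by
      rw [Finsupp.sum_smul_index (by simp)]
      have := endVec_sum (e : Sym2 V)
      calc ((endVec (e : Sym2 V)).sum fun _ k => n * k)
          = n * ((endVec (e : Sym2 V)).sum fun _ k => k) := by
            rw [Finsupp.mul_sum]
        _ = n * 2 := by rw [this]
    omega

lemma mass_eq_of_degVec_eq {a b : G.edgeSet →₀ ℕ} (h : degVec a = degVec b) :
    mass a = mass b := by
  have := sum_degVec a
  rw [h, sum_degVec] at this
  omega

end Deg
section Toric

open MvPolynomial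
open scoped Classical

variable {V : Type*} {K : Type*} [Field K] {G : SimpleGraph V}

lemma edgeImage_eq_monomial (e : Sym2 V) :
    edgeImage K e = monomial (endVec e) 1 := by
  induction e using Sym2.ind with
  | _ a b =>
    rw [edgeImage, Sym2.lift_mk]
    show X a * X b = _
    rw [endVec_mk, X, X, monomial_mul, one_mul]

/-- `aeval` of a monomial in the edge algebra. -/
lemma aeval_graph_monomial (w : G.edgeSet →₀ ℕ) (c : K) :
    MvPolynomial.aeval (fun e : G.edgeSet => edgeImage K (e : Sym2 V)) (monomial w c)
      = monomial (degVec w) c := by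
  induction w using Finsupp.induction with
  | zero =>
    rw [degVec_zero]
    rw [monomial_zero', monomial_zero', aeval_C]
    rfl
  | single_add e n f hef hn ih =>
    have h1 : monomial (Finsupp.single e n + f) c
        = monomial (Finsupp.single e n) (1 : K) * monomial f c := by
      rw [monomial_mul, one_mul]
    rw [h1, map_mul, ih]
    have h2 : (monomial (Finsupp.single e n) (1 : K)) = (X e) ^ n := by
      rw [X_pow_eq_monomial]
    rw [h2, map_pow, aeval_X, edgeImage_eq_monomial, monomial_pow, one_pow,
      monomial_mul, one_mul, degVec_add, degVec_single]

lemma binom_mem_toric {a b : G.edgeSet →₀ ℕ} (h : degVec a = degVec b) :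
    binom K a b ∈ graphToricIdeal K G := by
  show _ ∈ RingHom.ker _
  rw [RingHom.mem_ker]
  show (MvPolynomial.aeval _) (binom K a b) = 0
  rw [binom, map_sub, aeval_graph_monomial, aeval_graph_monomial, h, sub_self]

lemma fiber_sum_eq_zero {f : MvPolynomial G.edgeSet K}
    (hf : f ∈ graphToricIdeal K G) (D : V →₀ ℕ) :
    ∑ w ∈ f.support.filter (fun w => degVec w = D), f.coeff w = 0 := by
  classical
  have h0 : (MvPolynomial.aeval
      (fun e : G.edgeSet => edgeImage K (e : Sym2 V))) f = 0 := hf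
  conv_lhs at h0 => rw [f.as_sum]
  rw [map_sum] at h0
  have h1 : ∀ w ∈ f.support,
      (MvPolynomial.aeval (fun e : G.edgeSet => edgeImage K (e : Sym2 V)))
        (monomial w (f.coeff w)) = monomial (degVec w) (f.coeff w) :=
    fun w _ => aeval_graph_monomial w _
  rw [Finset.sum_congr rfl h1] at h0
  have h2 := congrArg (fun p => MvPolynomial.coeff D p) h0
  simp only [MvPolynomial.coeff_sum, coeff_monomial, coeff_zero] at h2
  rw [Finset.sum_filter]
  exact h2

lemma exists_partner {f : MvPolynomial G.edgeSet K}
    (hf : f ∈ graphToricIdeal K G) {w : G.edgeSet →₀ ℕ} (hw : w ∈ f.support) :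
    ∃ w' ∈ f.support, w' ≠ w ∧ degVec w' = degVec w := by
  classical
  by_contra hcon
  push_neg at hcon
  have h1 : f.support.filter (fun w' => degVec w' = degVec w) = {w} := by
    apply Finset.eq_singleton_iff_unique_mem.mpr
    constructor
    · exact Finset.mem_filter.mpr ⟨hw, rfl⟩
    · intro w' hw'
      rcases Finset.mem_filter.mp hw' with ⟨hm, hd⟩
      by_contra hne
      exact (hcon w' hm hne) hd
  have h2 := fiber_sum_eq_zero hf (degVec w)
  rw [h1, Finset.sum_singleton] at h2
  exact (MvPolynomial.mem_support_iff.mp hw) h2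

/-- Support and coefficients of a binomial. -/
lemma binom_coeff (a b x : σ →₀ ℕ) :
    (binom K a b).coeff x = (if a = x then (1:K) else 0) - (if b = x then 1 else 0) := by
  rw [binom, MvPolynomial.coeff_sub, coeff_monomial, coeff_monomial]

lemma binom_ne_zero {a b : σ →₀ ℕ} (h : a ≠ b) : (binom K a b) ≠ 0 := by
  classical
  intro h0
  have := congrArg (fun p => MvPolynomial.coeff a p) h0
  simp only [binom_coeff, coeff_zero, if_pos rfl, if_neg (Ne.symm h)] at this
  norm_num at this

lemma mem_binom_support {a b x : σ →₀ ℕ} (h : a ≠ b) :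
    x ∈ (binom K a b).support ↔ x = a ∨ x = b := by
  rw [MvPolynomial.mem_support_iff, binom_coeff]
  constructor
  · intro hx
    by_contra hm
    push_neg at hm
    rw [if_neg (fun hh => hm.1 hh.symm), if_neg (fun hh => hm.2 hh.symm)] at hx
    simp at hx
  · rintro (rfl | rfl)
    · rw [if_pos rfl, if_neg (Ne.symm h)]; norm_num
    · rw [if_pos rfl, if_neg h]; norm_num

end Toric
section Structure

open MvPolynomial
open scoped Classical

variable {V : Type*} {K : Type*} [Field K] {G : SimpleGraph V}

/-- Structure theorem: every element of the universal Gröbner basis of `I_G` is a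
primitive balanced binomial with disjoint supports. -/
lemma UGB_structure {f : MvPolynomial G.edgeSet K}
    (hf : f ∈ UniversalGB (graphToricIdeal K G)) :
    ∃ u v : G.edgeSet →₀ ℕ, u ≠ v ∧ degVec u = degVec v ∧
      (∀ e, ¬(e ∈ u.support ∧ e ∈ v.support)) ∧
      (∀ a b, degVec a = degVec b → a ≤ u → b ≤ v →
        (a = 0 ∧ b = 0) ∨ (a = u ∧ b = v)) ∧
      f.totalDegree = mass u := by
  obtain ⟨t, 𝒢, ⟨⟨hGI, hspan⟩, hmonic, hdiv⟩, hfG⟩ := hf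
  set I := graphToricIdeal K G with hI
  have hfI : f ∈ I := hGI hfG
  have hf1 : f.coeff (t.leadExp f) = 1 := hmonic f hfG
  have hf0 : f ≠ 0 := by
    intro h
    rw [h, MvPolynomial.coeff_zero] at hf1
    exact zero_ne_one hf1
  -- every nonzero element of I has its lead exponent divisible by some lead of 𝒢
  have hld : ∀ h : MvPolynomial G.edgeSet K, h ∈ I → h ≠ 0 →
      ∃ g' ∈ 𝒢, t.leadExp g' ≤ t.leadExp h := by
    intro h hIh hne
    have h1 : t.initial h ∈ Ideal.span (t.initial '' (𝒢 : Set (MvPolynomial G.edgeSet K))) := by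
      rw [hspan]
      exact Ideal.subset_span ⟨h, hIh, rfl⟩
    have h2 : t.initial '' (𝒢 : Set (MvPolynomial G.edgeSet K))
        = (fun s => monomial s (1 : K)) '' (t.leadExp '' (𝒢 : Set (MvPolynomial G.edgeSet K))) := by
      rw [Set.image_image]
      apply Set.image_congr
      intro g hg
      rw [TermOrder.initial, hmonic g hg]
    rw [h2] at h1
    have h3 := MvPolynomial.mem_ideal_span_monomial_image.mp h1
    have hco : h.coeff (t.leadExp h) ≠ 0 :=
      MvPolynomial.mem_support_iff.mp (t.leadExp_mem hne)
    have h4 : t.leadExp h ∈ (t.initial h).support := by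
      rw [TermOrder.initial, MvPolynomial.support_monomial, if_neg hco]
      exact Finset.mem_singleton_self _
    obtain ⟨si, hsi, hle⟩ := h3 _ h4
    obtain ⟨g', hg', rfl⟩ := hsi
    exact ⟨g', hg', hle⟩
  -- trailing monomials of f are standard
  have hT1 : ∀ w ∈ f.support, w ≠ t.leadExp f → ∀ h : MvPolynomial G.edgeSet K,
      h ∈ I → h ≠ 0 → ¬ t.leadExp h ≤ w := by
    intro w hw hwne h hIh hne hle
    obtain ⟨g', hg'G, hg'le⟩ := hld h hIh hne
    by_cases hgf : g' = f
    · subst hgf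
      exact hwne (t.eq_leadExp_of_le hw (le_trans hg'le hle))
    · exact hdiv f hfG g' hg'G hgf w hw (le_trans hg'le hle)
  -- the lead of f is a minimal generator of the initial ideal
  have hT2 : ∀ h : MvPolynomial G.edgeSet K, h ∈ I → h ≠ 0 →
      t.leadExp h ≤ t.leadExp f → t.leadExp h = t.leadExp f := by
    intro h hIh hne hle
    obtain ⟨g', hg'G, hg'le⟩ := hld h hIh hne
    by_cases hgf : g' = f
    · subst hgf
      exact le_antisymm hle hg'le
    · exact absurd (le_trans hg'le hle) (hdiv f hfG g' hg'G hgf _ (t.leadExp_mem hf0))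
  have hlead_binom : ∀ a b : G.edgeSet →₀ ℕ, a ≠ b →
      t.leadExp (binom K a b) = a ∨ t.leadExp (binom K a b) = b := by
    intro a b hab
    have hmem := t.leadExp_mem (binom_ne_zero hab (K := K))
    exact (mem_binom_support hab).mp hmem
  set u := t.leadExp f with hu
  have huf : u ∈ f.support := t.leadExp_mem hf0
  obtain ⟨v, hvf, hvu, hdv⟩ := exists_partner hfI huf
  -- the support of f is exactly {u, v}
  have hsupp : f.support = {u, v} := by
    apply Finset.Subset.antisymm
    · intro w hw
      by_contra hwm
      rw [Finset.mem_insert, Finset.mem_singleton] at hwm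
      push_neg at hwm
      obtain ⟨hwu, hwv⟩ := hwm
      obtain ⟨w', hw'f, hw'w, hw'd⟩ := exists_partner hfI hw
      rcases eq_or_ne w' u with rfl | hne'
      · -- partner is u; compare w with v instead
        have hd : degVec w = degVec v := by rw [← hw'd, hdv]
        have hbI : binom K w v ∈ I := binom_mem_toric hd
        have hb0 : binom K w v ≠ 0 := binom_ne_zero hwv
        rcases hlead_binom w v hwv with hl | hl
        · exact hT1 w hw hwu _ hbI hb0 (le_of_eq hl)
        · exact hT1 v hvf hvu _ hbI hb0 (le_of_eq hl)
      · have hbI : binom K w' w ∈ I := binom_mem_toric hw'd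
        have hb0 : binom K w' w ≠ 0 := binom_ne_zero hw'w
        rcases hlead_binom w' w hw'w with hl | hl
        · exact hT1 w' hw'f hne' _ hbI hb0 (le_of_eq hl)
        · exact hT1 w hw hwu _ hbI hb0 (le_of_eq hl)
    · intro w hw
      rcases Finset.mem_insert.mp hw with rfl | hw
      · exact huf
      · rw [Finset.mem_singleton] at hw
        subst hw
        exact hvf
  have hneUV : u ≠ v := Ne.symm hvu
  -- primitivity
  have hprim : ∀ a b : G.edgeSet →₀ ℕ, degVec a = degVec b → a ≤ u → b ≤ v →
      (a = 0 ∧ b = 0) ∨ (a = u ∧ b = v) := by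
    intro a b hab hau hbv
    rcases eq_or_ne a b with rfl | hne
    · rcases eq_or_ne a 0 with rfl | ha0
      · exact Or.inl ⟨rfl, rfl⟩
      · exfalso
        have h1 : u - a + a = u := tsub_add_cancel_of_le hau
        have h2 : v - a + a = v := tsub_add_cancel_of_le hbv
        have hd : degVec (u - a) = degVec (v - a) := by
          have h3 : degVec (u - a) + degVec a = degVec (v - a) + degVec a := by
            rw [← degVec_add, ← degVec_add, h1, h2, ← hdv]
          exact add_right_cancel h3
        have hne2 : u - a ≠ v - a := by
          intro h
          exact hneUV (by rw [← h1, ← h2, h])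
        have hbI : binom K (u - a) (v - a) ∈ I := binom_mem_toric hd
        have hb0 : binom K (u - a) (v - a) ≠ 0 := binom_ne_zero hne2
        rcases hlead_binom _ _ hne2 with hl | hl
        · have h5 := hT2 _ hbI hb0 (by rw [hl]; exact tsub_le_self)
          rw [hl] at h5
          apply ha0
          have h6 : u + a = u := by conv_lhs => rw [← h5, h1]
          exact add_eq_left.mp h6
        · exact hT1 v hvf hvu _ hbI hb0 (by rw [hl]; exact tsub_le_self)
    · have hbI : binom K a b ∈ I := binom_mem_toric hab
      have hb0 : binom K a b ≠ 0 := binom_ne_zero hne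
      rcases hlead_binom a b hne with hl | hl
      · have h2 := hT2 _ hbI hb0 (by rw [hl]; exact hau)
        rw [hl] at h2
        rcases eq_or_ne b v with rfl | hbne
        · exact Or.inr ⟨h2, rfl⟩
        · exfalso
          have hd2 : degVec b = degVec v := by rw [← hab, h2, hdv]
          have hbI2 : binom K b v ∈ I := binom_mem_toric hd2
          have hb02 : binom K b v ≠ 0 := binom_ne_zero hbne
          rcases hlead_binom b v hbne with hl2 | hl2
          · exact hT1 v hvf hvu _ hbI2 hb02 (by rw [hl2]; exact hbv)
          · exact hT1 v hvf hvu _ hbI2 hb02 (le_of_eq hl2)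
      · exact absurd (by rw [hl]; exact hbv) (hT1 v hvf hvu _ hbI hb0)
  -- disjoint supports
  have hdisj : ∀ e, ¬(e ∈ u.support ∧ e ∈ v.support) := by
    rintro e ⟨heu, hev⟩
    have h1 : Finsupp.single e 1 ≤ u := by
      rw [Finsupp.single_le_iff]
      exact Nat.one_le_iff_ne_zero.mpr (Finsupp.mem_support_iff.mp heu)
    have h2 : Finsupp.single e 1 ≤ v := by
      rw [Finsupp.single_le_iff]
      exact Nat.one_le_iff_ne_zero.mpr (Finsupp.mem_support_iff.mp hev)
    rcases hprim _ _ rfl h1 h2 with ⟨h3, _⟩ | ⟨h3, h4⟩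
    · exact one_ne_zero (Finsupp.single_eq_zero.mp h3)
    · exact hneUV (h3 ▸ h4 ▸ rfl)
  -- total degree
  have hmassuv : mass v = mass u := mass_eq_of_degVec_eq hdv
  have htd : f.totalDegree = mass u := by
    rw [MvPolynomial.totalDegree, hsupp]
    rw [Finset.sup_insert, Finset.sup_singleton]
    show mass u ⊔ mass v = mass u
    rw [hmassuv, sup_idem]
  exact ⟨u, v, hneUV, hdv.symm, hdisj, hprim, htd⟩

end Structure
section Walks

open Finset
open scoped Classical

variable {V : Type*} {G : SimpleGraph V}

lemma one_le_endVec_of_mem {e : Sym2 V} {y : V} (h : y ∈ e) : 1 ≤ endVec e y := by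
  induction e using Sym2.ind with
  | _ a b =>
    rw [endVec_apply]
    rcases Sym2.mem_iff.mp h with rfl | rfl
    · simp
    · split <;> simp

lemma degVec_mono {a b : G.edgeSet →₀ ℕ} (h : a ≤ b) : degVec a ≤ degVec b := by
  obtain ⟨c, rfl⟩ := le_iff_exists_add.mp h
  rw [degVec_add]
  exact le_add_of_nonneg_right zero_le

lemma degVec_sub_add {a b : G.edgeSet →₀ ℕ} (h : a ≤ b) :
    degVec (b - a) + degVec a = degVec b := by
  rw [← degVec_add, tsub_add_cancel_of_le h]

lemma one_le_degVec_of_mem {w : G.edgeSet →₀ ℕ} {e : G.edgeSet} {y : V}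
    (he : e ∈ w.support) (hy : y ∈ (e : Sym2 V)) : 1 ≤ degVec w y := by
  have h1 : Finsupp.single e 1 ≤ w := by
    rw [Finsupp.single_le_iff]
    exact Nat.one_le_iff_ne_zero.mpr (Finsupp.mem_support_iff.mp he)
  calc (1 : ℕ) ≤ endVec (e : Sym2 V) y := one_le_endVec_of_mem hy
    _ = degVec (Finsupp.single e 1) y := by rw [degVec_single, one_smul]
    _ ≤ degVec w y := degVec_mono h1 y

lemma exists_edge_at {w : G.edgeSet →₀ ℕ} {y : V} (h : degVec w y ≠ 0) :
    ∃ e : G.edgeSet, w e ≠ 0 ∧ y ∈ (e : Sym2 V) := by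
  rw [degVec, Finsupp.sum_apply] at h
  obtain ⟨e, _, hne⟩ := Finset.exists_ne_zero_of_sum_ne_zero h
  have hne' : (w e • endVec (e : Sym2 V)) y ≠ 0 := hne
  rw [Finsupp.smul_apply, smul_eq_mul] at hne'
  refine ⟨e, fun h0 => hne' ?_, endVec_apply_ne_zero fun h0 => hne' ?_⟩
  · rw [h0, zero_mul]
  · rw [h0, mul_zero]

/-- Sum of edge-singletons over a set of positions. -/
def susum (ed : ℕ → G.edgeSet) (s : Finset ℕ) : G.edgeSet →₀ ℕ :=
  ∑ t ∈ s, Finsupp.single (ed t) 1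

lemma susum_mono (ed : ℕ → G.edgeSet) {s s' : Finset ℕ} (h : s ⊆ s') :
    susum ed s ≤ susum ed s' :=
  Finset.sum_le_sum_of_subset h

lemma mass_susum (ed : ℕ → G.edgeSet) (s : Finset ℕ) : mass (susum ed s) = s.card := by
  induction s using Finset.induction with
  | empty => simp [susum, mass_zero]
  | insert _ _ hnm ih =>
    rw [susum, Finset.sum_insert hnm, ← susum, mass_add, mass_single, ih,
      Finset.card_insert_of_notMem hnm]
    omega

lemma susum_congr {ed ed' : ℕ → G.edgeSet} {s : Finset ℕ} (h : ∀ t ∈ s, ed t = ed' t) :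
    susum ed s = susum ed' s :=
  Finset.sum_congr rfl fun t ht => by rw [h t ht]

lemma one_le_susum_apply {ed : ℕ → G.edgeSet} {s : Finset ℕ} {t : ℕ} (ht : t ∈ s) :
    1 ≤ susum ed s (ed t) := by
  have h1 : Finsupp.single (ed t) 1 ≤ susum ed s := by
    have h2 : susum ed {t} ≤ susum ed s := susum_mono ed (Finset.singleton_subset_iff.mpr ht)
    rw [susum, Finset.sum_singleton] at h2
    exact h2
  have := h1 (ed t)
  simpa using this

lemma susum_insert (ed : ℕ → G.edgeSet) {t : ℕ} {s : Finset ℕ} (h : t ∉ s) :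
    susum ed (insert t s) = Finsupp.single (ed t) 1 + susum ed s := by
  rw [susum, susum, Finset.sum_insert h]

/-- The even positions in `[i, j)`. -/
def evens (i j : ℕ) : Finset ℕ := (Finset.Ico i j).filter (fun t => Even t)

/-- The odd positions in `[i, j)`. -/
def odds (i j : ℕ) : Finset ℕ := (Finset.Ico i j).filter (fun t => ¬ Even t)

lemma evens_card_add_odds_card (i j : ℕ) : (evens i j).card + (odds i j).card = j - i := by
  rw [evens, odds, Finset.card_filter_add_card_filter_not, Nat.card_Ico]

/-- The edges of a walk in even (resp. odd) positions in the window `[i, j)`. -/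
def segU (ed : ℕ → G.edgeSet) (i j : ℕ) : G.edgeSet →₀ ℕ := susum ed (evens i j)

def segW (ed : ℕ → G.edgeSet) (i j : ℕ) : G.edgeSet →₀ ℕ := susum ed (odds i j)

lemma mass_segU_add_mass_segW (ed : ℕ → G.edgeSet) (i j : ℕ) :
    mass (segU ed i j) + mass (segW ed i j) = j - i := by
  rw [segU, segW, mass_susum, mass_susum, evens_card_add_odds_card]

/-- Telescoping balance formula for a window of a walk. -/
lemma seg_balance {x : ℕ → V} {ed : ℕ → G.edgeSet} {i j : ℕ} (hij : i ≤ j)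
    (hed : ∀ t, i ≤ t → t < j → (ed t : Sym2 V) = s(x t, x (t + 1))) (y : V) :
    (degVec (segU ed i j) y : ℤ) - (degVec (segW ed i j) y : ℤ)
      = (-1) ^ i * (if x i = y then 1 else 0)
        - (-1) ^ j * (if x j = y then 1 else 0) := by
  induction j, hij using Nat.le_induction with
  | base =>
    have h0 : segU ed i i = 0 := by
      rw [segU, evens, Finset.Ico_self, Finset.filter_empty]
      exact Finset.sum_empty
    have h0' : segW ed i i = 0 := by
      rw [segW, odds, Finset.Ico_self, Finset.filter_empty]
      exact Finset.sum_empty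
    rw [h0, h0', degVec_zero]
    simp
  | succ j hij ih =>
    have hed' : ∀ t, i ≤ t → t < j → (ed t : Sym2 V) = s(x t, x (t + 1)) :=
      fun t h1 h2 => hed t h1 (Nat.lt_succ_of_lt h2)
    have ihx := ih hed'
    have hIco : Finset.Ico i (j + 1) = insert j (Finset.Ico i j) :=
      Nat.Ico_succ_right_eq_insert_Ico hij
    have hjnm : j ∉ Finset.Ico i j := by simp
    have hdj : (degVec (Finsupp.single (ed j) 1) y : ℤ)
        = (if x j = y then 1 else 0) + (if x (j + 1) = y then 1 else 0) := by
      rw [degVec_single, one_smul, hed j hij (Nat.lt_succ_self j), endVec_apply]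
      push_cast
      rfl
    have hfm : j ∉ (Finset.Ico i j).filter (fun t => Even t) :=
      fun hc => hjnm (Finset.mem_of_mem_filter j hc)
    have hfm' : j ∉ (Finset.Ico i j).filter (fun t => ¬ Even t) :=
      fun hc => hjnm (Finset.mem_of_mem_filter j hc)
    by_cases hpar : Even j
    · have hU : segU ed i (j + 1) = Finsupp.single (ed j) 1 + segU ed i j := by
        rw [segU, evens, hIco, Finset.filter_insert, if_pos hpar, susum_insert ed hfm]
        rfl
      have hW : segW ed i (j + 1) = segW ed i j := by
        rw [segW, odds, hIco, Finset.filter_insert, if_neg (not_not_intro hpar)]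
        rfl
      rw [hU, hW, degVec_add]
      simp only [Finsupp.coe_add, Pi.add_apply]
      have h1 : ((-1 : ℤ)) ^ j = 1 := Even.neg_one_pow hpar
      have h2 : ((-1 : ℤ)) ^ (j + 1) = -1 := by
        rw [pow_succ, h1, one_mul]
      rw [h1] at ihx
      rw [h2]
      push_cast
      push_cast at ihx hdj
      linarith
    · have hU : segU ed i (j + 1) = segU ed i j := by
        rw [segU, evens, hIco, Finset.filter_insert, if_neg hpar]
        rfl
      have hW : segW ed i (j + 1) = Finsupp.single (ed j) 1 + segW ed i j := by
        rw [segW, odds, hIco, Finset.filter_insert, if_pos hpar, susum_insert ed hfm']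
        rfl
      rw [hU, hW, degVec_add]
      simp only [Finsupp.coe_add, Pi.add_apply]
      have h1 : ((-1 : ℤ)) ^ j = -1 := Odd.neg_one_pow (Nat.not_even_iff_odd.mp hpar)
      have h2 : ((-1 : ℤ)) ^ (j + 1) = 1 := by
        rw [pow_succ, h1]
        norm_num
      rw [h1] at ihx
      rw [h2]
      push_cast
      push_cast at ihx hdj
      linarith

end Walks
section Euler

open Finset
open scoped Classical

variable {V : Type*} {G : SimpleGraph V}

lemma segU_self (ed : ℕ → G.edgeSet) (i : ℕ) : segU ed i i = 0 := by
  rw [segU, evens, Finset.Ico_self, Finset.filter_empty]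
  exact Finset.sum_empty

lemma segW_self (ed : ℕ → G.edgeSet) (i : ℕ) : segW ed i i = 0 := by
  rw [segW, odds, Finset.Ico_self, Finset.filter_empty]
  exact Finset.sum_empty

lemma mem_evens {i j t : ℕ} : t ∈ evens i j ↔ (i ≤ t ∧ t < j) ∧ Even t := by
  rw [evens, Finset.mem_filter, Finset.mem_Ico]

lemma mem_odds {i j t : ℕ} : t ∈ odds i j ↔ (i ≤ t ∧ t < j) ∧ ¬ Even t := by
  rw [odds, Finset.mem_filter, Finset.mem_Ico]

lemma evens_succ {i j : ℕ} (hij : i ≤ j) (h : Even j) :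
    evens i (j + 1) = insert j (evens i j) := by
  rw [evens, Nat.Ico_succ_right_eq_insert_Ico hij, Finset.filter_insert, if_pos h]
  rfl

lemma evens_succ' {i j : ℕ} (hij : i ≤ j) (h : ¬ Even j) :
    evens i (j + 1) = evens i j := by
  rw [evens, Nat.Ico_succ_right_eq_insert_Ico hij, Finset.filter_insert, if_neg h]
  rfl

lemma odds_succ {i j : ℕ} (hij : i ≤ j) (h : ¬ Even j) :
    odds i (j + 1) = insert j (odds i j) := by
  rw [odds, Nat.Ico_succ_right_eq_insert_Ico hij, Finset.filter_insert, if_pos h]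
  rfl

lemma odds_succ' {i j : ℕ} (hij : i ≤ j) (h : Even j) :
    odds i (j + 1) = odds i j := by
  rw [odds, Nat.Ico_succ_right_eq_insert_Ico hij, Finset.filter_insert,
    if_neg (not_not_intro h)]
  rfl

lemma not_mem_evens_self {i j : ℕ} : j ∉ evens i j :=
  fun hc => absurd (mem_evens.mp hc).1.2 (lt_irrefl j)

lemma not_mem_odds_self {i j : ℕ} : j ∉ odds i j :=
  fun hc => absurd (mem_odds.mp hc).1.2 (lt_irrefl j)

lemma add_single_le {A u : G.edgeSet →₀ ℕ} {e : G.edgeSet} (hA : A ≤ u) (he : A e < u e) :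
    Finsupp.single e 1 + A ≤ u := by
  rw [Finsupp.le_def]
  intro s
  rw [Finsupp.add_apply, Finsupp.single_apply]
  by_cases h : e = s
  · subst h
    simp only [eq_self_iff_true, if_true]
    have := hA e
    omega
  · rw [if_neg h, zero_add]
    exact hA s

/-- Existence of an alternating Eulerian closed walk realizing a primitive pair. -/
lemma euler_exists (u v : G.edgeSet →₀ ℕ) (hbal : degVec u = degVec v) (hune : u ≠ 0)
    (hprim : ∀ a b : G.edgeSet →₀ ℕ, degVec a = degVec b → a ≤ u → b ≤ v →
      (a = 0 ∧ b = 0) ∨ (a = u ∧ b = v)) :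
    ∃ (L : ℕ) (x : ℕ → V) (ed : ℕ → G.edgeSet), 0 < L ∧ Even L ∧
      (∀ t < L, (ed t : Sym2 V) = s(x t, x (t + 1))) ∧ x L = x 0 ∧
      segU ed 0 L = u ∧ segW ed 0 L = v := by
  have key : ∃ (L : ℕ) (x : ℕ → V) (ed : ℕ → G.edgeSet), 0 < L ∧ Even L ∧
      (∀ t < L, (ed t : Sym2 V) = s(x t, x (t + 1))) ∧ x L = x 0 ∧
      segU ed 0 L ≤ u ∧ segW ed 0 L ≤ v := by
    by_contra hkey
    have main : ∀ n : ℕ, ∃ (x : ℕ → V) (ed : ℕ → G.edgeSet),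
        (∀ t < n, (ed t : Sym2 V) = s(x t, x (t + 1))) ∧
        segU ed 0 n ≤ u ∧ segW ed 0 n ≤ v ∧ 1 ≤ degVec u (x 0) := by
      intro n
      induction n with
      | zero =>
        obtain ⟨e₀, he₀⟩ := Finsupp.support_nonempty_iff.mpr hune
        refine ⟨fun _ => (e₀ : Sym2 V).out.1, fun _ => e₀, ?_, ?_, ?_, ?_⟩
        · intro t ht
          exact absurd ht (Nat.not_lt_zero t)
        · rw [segU_self]
          exact zero_le
        · rw [segW_self]
          exact zero_le
        · exact one_le_degVec_of_mem he₀ (Sym2.out_fst_mem _)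
      | succ n ih =>
        obtain ⟨x, ed, hed, hAu, hBv, hx0⟩ := ih
        have hAB := seg_balance (x := x) (ed := ed) (Nat.zero_le n)
          (fun t _ h2 => hed t h2)
        by_cases hpar : Even n
        · -- extend with a `u`-edge at `x n`
          have hlt : degVec (segU ed 0 n) (x n) < degVec u (x n) := by
            have h1 := hAB (x n)
            rw [pow_zero, Even.neg_one_pow hpar, if_pos rfl, one_mul, one_mul] at h1
            by_cases hcl : x 0 = x n
            · rcases Nat.eq_zero_or_pos n with rfl | hn0
              · rw [segU_self, degVec_zero]
                have h2 : 1 ≤ degVec u (x 0) := hx0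
                simp only [Finsupp.coe_zero, Pi.zero_apply]
                omega
              · exact absurd ⟨n, x, ed, hn0, hpar, hed, hcl.symm, hAu, hBv⟩ hkey
            · rw [if_neg hcl] at h1
              have h2 : degVec (segU ed 0 n) (x n) < degVec (segW ed 0 n) (x n) := by
                omega
              calc degVec (segU ed 0 n) (x n) < degVec (segW ed 0 n) (x n) := h2
                _ ≤ degVec v (x n) := degVec_mono hBv (x n)
                _ = degVec u (x n) := by rw [← hbal]
          have hc : degVec (u - segU ed 0 n) (x n) ≠ 0 := by
            have h3 := congrArg (fun w : V →₀ ℕ => w (x n)) (degVec_sub_add hAu)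
            simp only [Finsupp.add_apply] at h3
            omega
          obtain ⟨e, hce, hye⟩ := exists_edge_at hc
          have hAe : segU ed 0 n e < u e := by
            have h4 : (u - segU ed 0 n) e = u e - segU ed 0 n e := Finsupp.tsub_apply u _ e
            have h5 := hAu e
            omega
          refine ⟨Function.update x (n + 1) (Sym2.Mem.other hye),
            Function.update ed n e, ?_, ?_, ?_, ?_⟩
          · intro t ht
            rcases Nat.lt_succ_iff_lt_or_eq.mp ht with ht' | rfl
            · rw [Function.update_of_ne (Nat.ne_of_lt ht'),
                Function.update_of_ne (by omega), Function.update_of_ne (by omega)]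
              exact hed t ht'
            · rw [Function.update_self, Function.update_self,
                Function.update_of_ne (by omega)]
              exact (Sym2.other_spec hye).symm
          · have hU : segU (Function.update ed n e) 0 (n + 1)
                = Finsupp.single e 1 + segU ed 0 n := by
              rw [segU, evens_succ (Nat.zero_le n) hpar,
                susum_insert _ not_mem_evens_self, Function.update_self]
              congr 1
              refine susum_congr fun t ht => ?_
              rw [Function.update_of_ne (Nat.ne_of_lt (mem_evens.mp ht).1.2)]
            rw [hU]
            exact add_single_le hAu hAe
          · have hW : segW (Function.update ed n e) 0 (n + 1) = segW ed 0 n := by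
              rw [segW, odds_succ' (Nat.zero_le n) hpar]
              refine susum_congr fun t ht => ?_
              rw [Function.update_of_ne (Nat.ne_of_lt (mem_odds.mp ht).1.2)]
            rw [hW]
            exact hBv
          · rw [Function.update_of_ne (by omega)]
            exact hx0
        · -- extend with a `v`-edge at `x n`
          have hlt : degVec (segW ed 0 n) (x n) < degVec v (x n) := by
            have h1 := hAB (x n)
            rw [pow_zero, Odd.neg_one_pow (Nat.not_even_iff_odd.mp hpar), if_pos rfl,
              one_mul] at h1
            have h2 : degVec (segW ed 0 n) (x n) < degVec (segU ed 0 n) (x n) := by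
              by_cases hcl : x 0 = x n
              · rw [if_pos hcl] at h1
                omega
              · rw [if_neg hcl] at h1
                omega
            calc degVec (segW ed 0 n) (x n) < degVec (segU ed 0 n) (x n) := h2
              _ ≤ degVec u (x n) := degVec_mono hAu (x n)
              _ = degVec v (x n) := by rw [hbal]
          have hc : degVec (v - segW ed 0 n) (x n) ≠ 0 := by
            have h3 := congrArg (fun w : V →₀ ℕ => w (x n)) (degVec_sub_add hBv)
            simp only [Finsupp.add_apply] at h3
            omega
          obtain ⟨e, hce, hye⟩ := exists_edge_at hc
          have hBe : segW ed 0 n e < v e := by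
            have h4 : (v - segW ed 0 n) e = v e - segW ed 0 n e := Finsupp.tsub_apply v _ e
            have h5 := hBv e
            omega
          refine ⟨Function.update x (n + 1) (Sym2.Mem.other hye),
            Function.update ed n e, ?_, ?_, ?_, ?_⟩
          · intro t ht
            rcases Nat.lt_succ_iff_lt_or_eq.mp ht with ht' | rfl
            · rw [Function.update_of_ne (Nat.ne_of_lt ht'),
                Function.update_of_ne (by omega), Function.update_of_ne (by omega)]
              exact hed t ht'
            · rw [Function.update_self, Function.update_self,
                Function.update_of_ne (by omega)]
              exact (Sym2.other_spec hye).symm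
          · have hU : segU (Function.update ed n e) 0 (n + 1) = segU ed 0 n := by
              rw [segU, evens_succ' (Nat.zero_le n) hpar]
              refine susum_congr fun t ht => ?_
              rw [Function.update_of_ne (Nat.ne_of_lt (mem_evens.mp ht).1.2)]
            rw [hU]
            exact hAu
          · have hW : segW (Function.update ed n e) 0 (n + 1)
                = Finsupp.single e 1 + segW ed 0 n := by
              rw [segW, odds_succ (Nat.zero_le n) hpar,
                susum_insert _ not_mem_odds_self, Function.update_self]
              congr 1
              refine susum_congr fun t ht => ?_
              rw [Function.update_of_ne (Nat.ne_of_lt (mem_odds.mp ht).1.2)]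
            rw [hW]
            exact add_single_le hBv hBe
          · rw [Function.update_of_ne (by omega)]
            exact hx0
    obtain ⟨x, ed, _, hAu, hBv, _⟩ := main (mass u + mass v + 1)
    have h1 := mass_segU_add_mass_segW ed 0 (mass u + mass v + 1)
    have h2 := mass_mono hAu
    have h3 := mass_mono hBv
    omega
  obtain ⟨L, x, ed, hL0, hLe, hed, hxL, hAu, hBv⟩ := key
  have hd : degVec (segU ed 0 L) = degVec (segW ed 0 L) := by
    ext y
    have h1 := seg_balance (x := x) (ed := ed) (Nat.zero_le L) (fun t _ h2 => hed t h2) y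
    rw [pow_zero, Even.neg_one_pow hLe, hxL] at h1
    have h2 : (degVec (segU ed 0 L) y : ℤ) = degVec (segW ed 0 L) y := by linarith
    exact_mod_cast h2
  rcases hprim _ _ hd hAu hBv with ⟨hA0, _⟩ | ⟨hA1, hB1⟩
  · exfalso
    have h1 : (evens 0 L).card = 0 := by
      have := mass_susum ed (evens 0 L)
      rw [← segU, hA0, mass_zero] at this
      omega
    have h2 : (0 : ℕ) ∈ evens 0 L := mem_evens.mpr ⟨⟨le_refl 0, hL0⟩, Even.zero⟩
    rw [Finset.card_eq_zero.mp h1] at h2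
    exact absurd h2 (Finset.notMem_empty 0)
  · exact ⟨L, x, ed, hL0, hLe, hed, hxL, hA1, hB1⟩

end Euler
section Word2

open Finset
open scoped Classical

variable {V : Type*}

lemma four_le_card {s : Finset ℕ} {a b c d : ℕ} (ha : a ∈ s) (hb : b ∈ s) (hc : c ∈ s)
    (hd : d ∈ s) (h1 : a ≠ b) (h2 : a ≠ c) (h3 : a ≠ d) (h4 : b ≠ c) (h5 : b ≠ d)
    (h6 : c ≠ d) : 4 ≤ s.card := by
  have hsub : ({a, b, c, d} : Finset ℕ) ⊆ s := by
    intro x hx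
    simp only [Finset.mem_insert, Finset.mem_singleton] at hx
    rcases hx with rfl | rfl | rfl | rfl
    · exact ha
    · exact hb
    · exact hc
    · exact hd
  have hcard : ({a, b, c, d} : Finset ℕ).card = 4 := by
    rw [Finset.card_insert_of_notMem (by simp [h1, h2, h3]),
      Finset.card_insert_of_notMem (by simp [h4, h5]),
      Finset.card_insert_of_notMem (by simp [h6]), Finset.card_singleton]
  calc 4 = ({a, b, c, d} : Finset ℕ).card := hcard.symm
    _ ≤ s.card := Finset.card_le_card hsub

end Word2
section Word

open Finset
open scoped Classical

variable {V : Type*}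

/-- Cyclic word combinatorics: a cyclic word of even length `L ≥ 4` in which no letter repeats
within distance 2, letters repeat at most with opposite parity, and repeats are non-crossing,
has at least `L/2 + 2` distinct letters. -/
lemma word_bound {L : ℕ} (hL4 : 4 ≤ L) (w : ℕ → V)
    (hper : ∀ k, w (k + L) = w k)
    (h1 : ∀ k, w k ≠ w (k + 1))
    (h2 : ∀ k, w k ≠ w (k + 2))
    (h3 : ∀ k l, k < l → l < L → w k = w l → ¬ Even (l - k))
    (h4 : ∀ k p l r, k < p → p < l → l < r → r < L → w k = w l → w p = w r → False) :
    L + 4 ≤ 2 * ((Finset.range L).image w).card := by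
  have hpar : ∀ k l, k < L → l < L → k ≠ l → w k = w l → k % 2 ≠ l % 2 := by
    intro k l hk hl hne hw
    rcases lt_or_gt_of_ne hne with h | h
    · have h5 := h3 k l h hl hw
      rw [Nat.even_sub (le_of_lt h)] at h5
      simp only [Nat.even_iff] at h5
      omega
    · have h5 := h3 l k h hk hw.symm
      rw [Nat.even_sub (le_of_lt h)] at h5
      simp only [Nat.even_iff] at h5
      omega
  have hfib2 : ∀ k l, k < l → l < L → w k = w l → ∀ m, m < L → w m = w k →
      m = k ∨ m = l := by
    intro k l hkl hl hw m hm hwm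
    by_contra hcon
    push_neg at hcon
    have p1 := hpar k l (lt_trans hkl hl) hl (Nat.ne_of_lt hkl) hw
    have p2 := hpar m k hm (lt_trans hkl hl) hcon.1 hwm
    have p3 := hpar m l hm hl hcon.2 (hwm.trans hw)
    omega
  have hgap : ∀ k l, k < l → l < L → w k = w l → k + 3 ≤ l := by
    intro k l hkl hl hw
    by_contra hcon
    push_neg at hcon
    rcases (by omega : l = k + 1 ∨ l = k + 2) with hc | hc
    · exact h1 k (by rw [← hc]; exact hw)
    · exact h2 k (by rw [← hc]; exact hw)
  have houter : ∀ k l, k < l → l < L → w k = w l → l - k + 3 ≤ L := by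
    intro k l hkl hl hw
    by_contra hcon
    push_neg at hcon
    rcases (by omega : l - k = L - 1 ∨ l - k = L - 2) with hc | hc
    · have hk0 : k = 0 := by omega
      have hl0 : l = L - 1 := by omega
      refine h1 (L - 1) ?_
      calc w (L - 1) = w l := by rw [hl0]
        _ = w k := hw.symm
        _ = w (0 + L) := by rw [hk0, hper 0]
        _ = w (L - 1 + 1) := by congr 1; omega
    · rcases (by omega : k = 0 ∨ k = 1) with hk | hk
      · have hl0 : l = L - 2 := by omega
        refine h2 (L - 2) ?_
        calc w (L - 2) = w l := by rw [hl0]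
          _ = w k := hw.symm
          _ = w (0 + L) := by rw [hk, hper 0]
          _ = w (L - 2 + 2) := by congr 1; omega
      · have hl0 : l = L - 1 := by omega
        refine h2 (L - 1) ?_
        calc w (L - 1) = w l := by rw [hl0]
          _ = w k := hw.symm
          _ = w (1 + L) := by rw [hk, hper 1]
          _ = w (L - 1 + 2) := by congr 1; omega
  -- singles
  set Sing : Finset ℕ := (Finset.range L).filter
    (fun k => ∀ l < L, w l = w k → l = k) with hSing
  -- counting: it suffices to find four singles
  have hcount : Sing.card ≤ 2 * ((Finset.range L).image w).card - L := by
    set img := (Finset.range L).image w with himg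
    have hL : L = ∑ y ∈ img, ((Finset.range L).filter (fun k => w k = y)).card := by
      have hL' := Finset.card_eq_sum_card_fiberwise
        (fun k (hk : k ∈ Finset.range L) => Finset.mem_image_of_mem w hk)
      rwa [Finset.card_range] at hL'
    have hge1 : ∀ y ∈ img, 1 ≤ ((Finset.range L).filter (fun k => w k = y)).card := by
      intro y hy
      obtain ⟨k, hk, rfl⟩ := Finset.mem_image.mp hy
      exact Finset.card_pos.mpr ⟨k, Finset.mem_filter.mpr ⟨hk, rfl⟩⟩
    have hle2 : ∀ y, ((Finset.range L).filter (fun k => w k = y)).card ≤ 2 := by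
      intro y
      by_contra hcon
      push_neg at hcon
      obtain ⟨a, b, c, ha, hb, hc, hab, hac, hbc⟩ := Finset.two_lt_card_iff.mp hcon
      rw [Finset.mem_filter, Finset.mem_range] at ha hb hc
      have p1 := hpar a b ha.1 hb.1 hab (ha.2.trans hb.2.symm)
      have p2 := hpar a c ha.1 hc.1 hac (ha.2.trans hc.2.symm)
      have p3 := hpar b c hb.1 hc.1 hbc (hb.2.trans hc.2.symm)
      omega
    -- map singles injectively to singleton fibers
    have hsub : Sing.card ≤ (img.filter
        (fun y => ((Finset.range L).filter (fun k => w k = y)).card = 1)).card := by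
      apply Finset.card_le_card_of_injOn w
      · intro k hk
        have hk := Finset.mem_filter.mp (Finset.mem_coe.mp hk)
        refine Finset.mem_filter.mpr ⟨Finset.mem_image_of_mem w hk.1, ?_⟩
        rw [Finset.card_eq_one]
        refine ⟨k, ?_⟩
        ext l
        rw [Finset.mem_filter, Finset.mem_range, Finset.mem_singleton]
        constructor
        · rintro ⟨hl, hwl⟩
          exact hk.2 l hl hwl
        · rintro rfl
          exact ⟨Finset.mem_range.mp hk.1, rfl⟩
      · intro k hk k' hk' hww
        have hk := Finset.mem_filter.mp (Finset.mem_coe.mp hk)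
        have hk' := Finset.mem_filter.mp (Finset.mem_coe.mp hk')
        exact (hk.2 k' (Finset.mem_range.mp hk'.1) hww.symm).symm
    -- fiberwise count
    have hkey : L + (img.filter
        (fun y => ((Finset.range L).filter (fun k => w k = y)).card = 1)).card
        = 2 * img.card := by
      have e1 : ∀ y ∈ img, ((Finset.range L).filter (fun k => w k = y)).card
          + (if ((Finset.range L).filter (fun k => w k = y)).card = 1 then 1 else 0)
          = 2 := by
        intro y hy
        have := hge1 y hy
        have := hle2 y
        by_cases h : ((Finset.range L).filter (fun k => w k = y)).card = 1
        · rw [if_pos h]; omega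
        · rw [if_neg h]; omega
      have e2 : ∑ y ∈ img, (((Finset.range L).filter (fun k => w k = y)).card
          + (if ((Finset.range L).filter (fun k => w k = y)).card = 1 then 1 else 0))
          = ∑ y ∈ img, 2 := Finset.sum_congr rfl e1
      rw [Finset.sum_add_distrib] at e2
      rw [← Finset.card_filter] at e2  -- sum of ifs = card filter (hope orientation)
      rw [Finset.sum_const, smul_eq_mul] at e2
      omega
    omega
  suffices hfour : 4 ≤ Sing.card by
    have himgle := hcount
    omega
  -- pair bookkeeping
  set PR : Finset (ℕ × ℕ) := ((Finset.range L) ×ˢ (Finset.range L)).filter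
    (fun q => q.1 < q.2 ∧ w q.1 = w q.2) with hPR
  have hmemPR : ∀ q : ℕ × ℕ, q ∈ PR ↔ (q.2 < L ∧ q.1 < q.2 ∧ w q.1 = w q.2) := by
    intro q
    rw [hPR, Finset.mem_filter, Finset.mem_product, Finset.mem_range, Finset.mem_range]
    constructor
    · rintro ⟨⟨_, hb⟩, hc⟩
      exact ⟨hb, hc⟩
    · rintro ⟨hq2, hq12, hw⟩
      exact ⟨⟨lt_trans hq12 hq2, hq2⟩, hq12, hw⟩
  have hSingMem : ∀ j, j < L → (∀ l, l < L → w l = w j → l = j) → j ∈ Sing := by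
    intro j hj hcond
    refine Finset.mem_filter.mpr ⟨Finset.mem_range.mpr hj, ?_⟩
    intro l hl hwl
    exact hcond l hl hwl
  by_cases hPRe : PR = ∅
  · -- no repeats at all: all of range L is single
    have hsub : Finset.range L ⊆ Sing := by
      intro k hk
      refine hSingMem k (Finset.mem_range.mp hk) ?_
      intro l hl hwl
      by_contra hne
      rcases lt_or_gt_of_ne hne with h | h
      · have hmem : (l, k) ∈ PR := (hmemPR _).mpr ⟨Finset.mem_range.mp hk, h, hwl⟩
        rw [hPRe] at hmem
        exact absurd hmem (Finset.notMem_empty _)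
      · have hmem : (k, l) ∈ PR := (hmemPR _).mpr ⟨hl, h, hwl.symm⟩
        rw [hPRe] at hmem
        exact absurd hmem (Finset.notMem_empty _)
    have hcard := Finset.card_le_card hsub
    rw [Finset.card_range] at hcard
    omega
  · obtain ⟨q₀, hq₀PR, hq₀min⟩ := Finset.exists_min_image PR (fun q => q.2 - q.1)
      (Finset.nonempty_of_ne_empty hPRe)
    obtain ⟨hl₀L, hkl₀, hw₀⟩ := (hmemPR q₀).mp hq₀PR
    set k₀ := q₀.1 with hk₀def
    set l₀ := q₀.2 with hl₀def
    have hk₀L : k₀ < L := lt_trans hkl₀ hl₀L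
    have hg3 : k₀ + 3 ≤ l₀ := hgap _ _ hkl₀ hl₀L hw₀
    have hout : l₀ - k₀ + 3 ≤ L := houter _ _ hkl₀ hl₀L hw₀
    have huniq : ∀ m, m < L → w m = w k₀ → m = k₀ ∨ m = l₀ :=
      fun m hm hwm => hfib2 k₀ l₀ hkl₀ hl₀L hw₀ m hm hwm
    -- inner positions of the minimal pair are singles
    have hinner : ∀ j, k₀ < j → j < l₀ → j ∈ Sing := by
      intro j hj1 hj2
      have hjL : j < L := lt_trans hj2 hl₀L
      refine hSingMem j hjL ?_
      intro l hl hwl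
      by_contra hne
      rcases lt_trichotomy l k₀ with hc | hc | hc
      · exact h4 l k₀ j l₀ hc hj1 hj2 hl₀L hwl hw₀
      · have hjk : w j = w k₀ := by rw [← hc]; exact hwl.symm
        rcases huniq j hjL hjk with h | h <;> omega
      · rcases lt_trichotomy l j with hd | hd | hd
        · have hmem : (l, j) ∈ PR := (hmemPR _).mpr ⟨hjL, hd, hwl⟩
          have hmin := hq₀min _ hmem
          simp only at hmin
          omega
        · exact hne hd
        · rcases lt_trichotomy l l₀ with he | he | he
          · have hmem : (j, l) ∈ PR := (hmemPR _).mpr ⟨hl, hd, hwl.symm⟩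
            have hmin := hq₀min _ hmem
            simp only at hmin
            omega
          · have hjk : w j = w k₀ :=
              calc w j = w l := hwl.symm
                _ = w l₀ := by rw [he]
                _ = w k₀ := hw₀.symm
            rcases huniq j hjL hjk with h | h <;> omega
          · exact h4 k₀ j l₀ l hj1 hj2 he hl hw₀ hwl.symm
    have hs1 : k₀ + 1 ∈ Sing := hinner _ (by omega) (by omega)
    have hs2 : k₀ + 2 ∈ Sing := hinner _ (by omega) (by omega)
    -- pairs other than the minimal one
    set PR' : Finset (ℕ × ℕ) := PR.filter (fun q => q.1 ≠ k₀) with hPR'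
    have hPfacts : ∀ q ∈ PR', (q.2 < L ∧ q.1 < q.2 ∧ w q.1 = w q.2) ∧
        ((q.1 < k₀ ∨ l₀ < q.1) ∧ (q.2 < k₀ ∨ l₀ < q.2)) := by
      intro q hq
      obtain ⟨hqPR, hq1⟩ := Finset.mem_filter.mp hq
      obtain ⟨hq2L, hq12, hqw⟩ := (hmemPR q).mp hqPR
      have hq1L : q.1 < L := lt_trans hq12 hq2L
      refine ⟨⟨hq2L, hq12, hqw⟩, ?_, ?_⟩
      · rcases lt_trichotomy q.1 k₀ with h | h | h
        · exact Or.inl h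
        · exact absurd h hq1
        · rcases lt_trichotomy q.1 l₀ with h' | h' | h'
          · exfalso
            have hs := hinner q.1 h h'
            have := (Finset.mem_filter.mp hs).2 q.2 hq2L hqw.symm
            omega
          · exfalso
            have hqk : w q.2 = w k₀ :=
              calc w q.2 = w q.1 := hqw.symm
                _ = w l₀ := by rw [h']
                _ = w k₀ := hw₀.symm
            rcases huniq q.2 hq2L hqk with h'' | h'' <;> omega
          · exact Or.inr h'
      · rcases lt_trichotomy q.2 k₀ with h | h | h
        · exact Or.inl h
        · exfalso
          have hqk : w q.1 = w k₀ := by rw [← h]; exact hqw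
          rcases huniq q.1 hq1L hqk with h'' | h''
          · exact hq1 h''
          · omega
        · rcases lt_trichotomy q.2 l₀ with h' | h' | h'
          · exfalso
            have hs := hinner q.2 h h'
            have := (Finset.mem_filter.mp hs).2 q.1 hq1L hqw
            omega
          · exfalso
            have hqk : w q.1 = w k₀ :=
              calc w q.1 = w q.2 := hqw
                _ = w l₀ := by rw [h']
                _ = w k₀ := hw₀.symm
            rcases huniq q.1 hq1L hqk with h'' | h''
            · exact hq1 h''
            · omega
          · exact Or.inr h'
    by_cases hPR'e : PR' = ∅
    · -- only one repeated value: everything except k₀, l₀ is single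
      have hsub : (Finset.range L).filter (fun m => ¬(m = k₀ ∨ m = l₀)) ⊆ Sing := by
        intro m hm
        obtain ⟨hmR, hmne⟩ := Finset.mem_filter.mp hm
        push_neg at hmne
        have hmL := Finset.mem_range.mp hmR
        refine hSingMem m hmL ?_
        intro l hl hwl
        by_contra hne
        rcases lt_or_gt_of_ne hne with hc | hc
        · have hmem : (l, m) ∈ PR := (hmemPR _).mpr ⟨hmL, hc, hwl⟩
          by_cases hlk : l = k₀
          · have hmk : w m = w k₀ := by rw [← hlk]; exact hwl.symm
            rcases huniq m hmL hmk with h | h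
            · exact hmne.1 h
            · exact hmne.2 h
          · have hmem' : (l, m) ∈ PR' := Finset.mem_filter.mpr ⟨hmem, hlk⟩
            rw [hPR'e] at hmem'
            exact absurd hmem' (Finset.notMem_empty _)
        · have hmem : (m, l) ∈ PR := (hmemPR _).mpr ⟨hl, hc, hwl.symm⟩
          by_cases hlk : m = k₀
          · exact hmne.1 hlk
          · have hmem' : (m, l) ∈ PR' := Finset.mem_filter.mpr ⟨hmem, hlk⟩
            rw [hPR'e] at hmem'
            exact absurd hmem' (Finset.notMem_empty _)
      have hcard := Finset.card_le_card hsub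
      have h2 := Finset.card_filter_add_card_filter_not
        (s := Finset.range L) (p := fun m => m = k₀ ∨ m = l₀)
      have h1 : (Finset.range L).filter (fun m => m = k₀ ∨ m = l₀) ⊆ {k₀, l₀} := by
        intro m hm
        obtain ⟨_, hmn⟩ := Finset.mem_filter.mp hm
        rcases hmn with rfl | rfl
        · exact Finset.mem_insert_self _ _
        · exact Finset.mem_insert_of_mem (Finset.mem_singleton_self _)
      have h3 := Finset.card_le_card h1
      have h4' : ({k₀, l₀} : Finset ℕ).card ≤ 2 := by
        have := Finset.card_insert_le k₀ ({l₀} : Finset ℕ)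
        simpa using this
      rw [Finset.card_range] at h2
      omega
    · -- a second pair exists
      set SP : Finset (ℕ × ℕ) := PR'.filter (fun q => q.2 < k₀ ∨ l₀ < q.1) with hSP
      by_cases hSPe : SP = ∅
      · -- all remaining pairs are "containing"; take the one with minimal outer arc
        have hcont : ∀ q ∈ PR', q.1 < k₀ ∧ l₀ < q.2 := by
          intro q hq
          obtain ⟨⟨hq2L, hq12, hqw⟩, hA, hB⟩ := hPfacts q hq
          rcases hA with hA | hA
          · rcases hB with hB | hB
            · exfalso
              have : q ∈ SP := Finset.mem_filter.mpr ⟨hq, Or.inl hB⟩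
              rw [hSPe] at this
              exact absurd this (Finset.notMem_empty _)
            · exact ⟨hA, hB⟩
          · exfalso
            have : q ∈ SP := Finset.mem_filter.mpr ⟨hq, Or.inr hA⟩
            rw [hSPe] at this
            exact absurd this (Finset.notMem_empty _)
        obtain ⟨q₁, hq₁, hq₁min⟩ := Finset.exists_min_image PR'
          (fun q => q.1 + (L - q.2)) (Finset.nonempty_of_ne_empty hPR'e)
        obtain ⟨⟨hbL, hab, hwab⟩, _, _⟩ := hPfacts q₁ hq₁
        obtain ⟨hak, hlb⟩ := hcont q₁ hq₁
        set a := q₁.1 with hadef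
        set b := q₁.2 with hbdef
        have hfib_ab : ∀ m, m < L → w m = w a → m = a ∨ m = b :=
          fun m hm hwm => hfib2 a b hab hbL hwab m hm hwm
        have houtab : b - a + 3 ≤ L := houter _ _ hab hbL hwab
        -- outer positions are singles
        have hoSing : ∀ j, j < L → (j < a ∨ b < j) → j ∈ Sing := by
          intro j hjL hj
          refine hSingMem j hjL ?_
          intro l hl hwl
          by_contra hne
          have hja : j ≠ a := by omega
          have hjb : j ≠ b := by omega
          have hjk₀ : j ≠ k₀ := by omega
          have hjl₀ : j ≠ l₀ := by omega
          by_cases hla : l = a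
          · have : w j = w a := by rw [← hla]; exact hwl.symm
            rcases hfib_ab j hjL this with h | h <;> omega
          by_cases hlb' : l = b
          · have hwja : w j = w a :=
              calc w j = w l := hwl.symm
                _ = w b := by rw [hlb']
                _ = w a := hwab.symm
            rcases hfib_ab j hjL hwja with h | h <;> omega
          by_cases hlk₀ : l = k₀
          · have : w j = w k₀ := by rw [← hlk₀]; exact hwl.symm
            rcases huniq j hjL this with h | h <;> omega
          by_cases hll₀ : l = l₀
          · have hwjk : w j = w k₀ :=
              calc w j = w l := hwl.symm
                _ = w l₀ := by rw [hll₀]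
                _ = w k₀ := hw₀.symm
            rcases huniq j hjL hwjk with h | h <;> omega
          -- l strictly inside (k₀, l₀)?
          by_cases hlin : k₀ < l ∧ l < l₀
          · have hs := hinner l hlin.1 hlin.2
            exact hne ((Finset.mem_filter.mp hs).2 j hjL hwl.symm).symm
          -- l in the middle ring (a, k₀) ∪ (l₀, b)?
          push_neg at hlin
          by_cases hmid : (a < l ∧ l < b)
          · -- crossing with (a, b)
            rcases hj with hj | hj
            · exact h4 j a l b (by omega) (by omega) (by omega) hbL hwl.symm hwab
            · exact h4 a l b j (by omega) (by omega) (by omega) hjL hwab hwl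
          · -- l in the outer region too: a second pair inside the outer arc
            push_neg at hmid
            have hlout : l < a ∨ b < l := by omega
            -- sorted pair
            rcases lt_or_gt_of_ne hne with hc | hc
            · have hmem : (l, j) ∈ PR := (hmemPR _).mpr ⟨hjL, hc, hwl⟩
              have hmem' : (l, j) ∈ PR' := Finset.mem_filter.mpr ⟨hmem, by omega⟩
              have hcq := hcont _ hmem'
              simp only at hcq
              -- containing: l < k₀ < l₀ < j, so l < a and j > b
              have hle : l < a := by omega
              have hjb' : b < j := by omega
              have hmin := hq₁min _ hmem'
              simp only at hmin
              omega
            · have hmem : (j, l) ∈ PR := (hmemPR _).mpr ⟨hl, hc, hwl.symm⟩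
              have hmem' : (j, l) ∈ PR' := Finset.mem_filter.mpr ⟨hmem, by omega⟩
              have hcq := hcont _ hmem'
              simp only at hcq
              have hle : j < a := by omega
              have hjb' : b < l := by omega
              have hmin := hq₁min _ hmem'
              simp only at hmin
              omega
        -- pick two outer singles
        have harc : 2 ≤ a + (L - 1 - b) := by omega
        have hs34 : ∃ s3 s4, s3 ∈ Sing ∧ s4 ∈ Sing ∧ s3 ≠ s4 ∧
            s3 ≠ k₀ + 1 ∧ s3 ≠ k₀ + 2 ∧ s4 ≠ k₀ + 1 ∧ s4 ≠ k₀ + 2 := by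
          rcases (by omega : 2 ≤ a ∨ a = 1 ∨ a = 0) with h | h | h
          · exact ⟨0, 1, hoSing 0 (by omega) (by omega), hoSing 1 (by omega) (by omega),
              by omega, by omega, by omega, by omega, by omega⟩
          · exact ⟨0, b + 1, hoSing 0 (by omega) (by omega),
              hoSing (b + 1) (by omega) (by omega),
              by omega, by omega, by omega, by omega, by omega⟩
          · exact ⟨b + 1, b + 2, hoSing (b + 1) (by omega) (by omega),
              hoSing (b + 2) (by omega) (by omega),
              by omega, by omega, by omega, by omega, by omega⟩
        obtain ⟨s3, s4, hs3, hs4, h34, h31, h32, h41, h42⟩ := hs34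
        have := four_le_card hs1 hs2 hs3 hs4 (by omega) (Ne.symm h31) (Ne.symm h41)
          (Ne.symm h32) (Ne.symm h42) h34
        omega
      · -- a "sided" pair exists; take the one with minimal gap
        obtain ⟨q₁, hq₁, hq₁min⟩ := Finset.exists_min_image SP
          (fun q => q.2 - q.1) (Finset.nonempty_of_ne_empty hSPe)
        have hq₁PR' : q₁ ∈ PR' := Finset.mem_of_mem_filter _ hq₁
        obtain ⟨⟨hbL, hab, hwab⟩, hA, hB⟩ := hPfacts q₁ hq₁PR'
        have hside := (Finset.mem_filter.mp hq₁).2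
        set a := q₁.1 with hadef
        set b := q₁.2 with hbdef
        -- the interval (a, b) avoids [k₀, l₀]
        have hiv : b < k₀ ∨ l₀ < a := by
          rcases hside with h | h
          · exact Or.inl h
          · exact Or.inr h
        have hfib_ab : ∀ m, m < L → w m = w a → m = a ∨ m = b :=
          fun m hm hwm => hfib2 a b hab hbL hwab m hm hwm
        have hgab : a + 3 ≤ b := hgap _ _ hab hbL hwab
        -- inner positions of q₁ are singles
        have hoSing : ∀ j, a < j → j < b → j ∈ Sing := by
          intro j hj1 hj2
          have hjL : j < L := lt_trans hj2 hbL
          refine hSingMem j hjL ?_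
          intro l hl hwl
          by_contra hne
          have hja : j ≠ a := by omega
          have hjb : j ≠ b := by omega
          by_cases hla : l = a
          · have : w j = w a := by rw [← hla]; exact hwl.symm
            rcases hfib_ab j hjL this with h | h <;> omega
          by_cases hlb' : l = b
          · have hwja : w j = w a :=
              calc w j = w l := hwl.symm
                _ = w b := by rw [hlb']
                _ = w a := hwab.symm
            rcases hfib_ab j hjL hwja with h | h <;> omega
          by_cases hmid : a < l ∧ l < b
          · -- a smaller sided pair strictly inside (a, b)
            rcases lt_or_gt_of_ne hne with hc | hc
            · have hmem : (l, j) ∈ PR := (hmemPR _).mpr ⟨hjL, hc, hwl⟩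
              have hmem' : (l, j) ∈ PR' := Finset.mem_filter.mpr ⟨hmem, by omega⟩
              have hmem'' : (l, j) ∈ SP := Finset.mem_filter.mpr ⟨hmem', by
                simp only
                omega⟩
              have hmin := hq₁min _ hmem''
              simp only at hmin
              omega
            · have hmem : (j, l) ∈ PR := (hmemPR _).mpr ⟨hl, hc, hwl.symm⟩
              have hmem' : (j, l) ∈ PR' := Finset.mem_filter.mpr ⟨hmem, by omega⟩
              have hmem'' : (j, l) ∈ SP := Finset.mem_filter.mpr ⟨hmem', by
                simp only
                omega⟩
              have hmin := hq₁min _ hmem''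
              simp only at hmin
              omega
          · -- l outside [a, b]: crossing with (a, b)
            push_neg at hmid
            have hlout : l < a ∨ b < l := by omega
            rcases hlout with hc | hc
            · exact h4 l a j b hc (by omega) (by omega) hbL hwl hwab
            · exact h4 a j b l (by omega) (by omega) hc hl hwab hwl.symm
        have hs3 : a + 1 ∈ Sing := hoSing _ (by omega) (by omega)
        have hs4 : a + 2 ∈ Sing := hoSing _ (by omega) (by omega)
        have hdist : (a + 1 ≠ k₀ + 1) ∧ (a + 1 ≠ k₀ + 2) ∧ (a + 2 ≠ k₀ + 1)
            ∧ (a + 2 ≠ k₀ + 2) := by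
          rcases hiv with h | h
          · constructor
            · omega
            · constructor
              · omega
              · constructor <;> omega
          · constructor
            · omega
            · constructor
              · omega
              · constructor <;> omega
        have := four_le_card hs1 hs2 hs3 hs4 (by omega) (Ne.symm hdist.1)
          (Ne.symm hdist.2.2.1) (Ne.symm hdist.2.1) (Ne.symm hdist.2.2.2) (by omega)
        omega

end Word
section Final

open Finset
open scoped Classical

variable {V : Type*} [Fintype V] {G : SimpleGraph V}

lemma comb_bound (u v : G.edgeSet →₀ ℕ) (hbal : degVec u = degVec v) (hne : u ≠ v)
    (hdisj : ∀ e, ¬(e ∈ u.support ∧ e ∈ v.support))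
    (hprim : ∀ a b : G.edgeSet →₀ ℕ, degVec a = degVec b → a ≤ u → b ≤ v →
      (a = 0 ∧ b = 0) ∨ (a = u ∧ b = v)) :
    mass u ≤ Fintype.card V - 2 := by
  have hune : u ≠ 0 := by
    intro h0
    apply hne
    have hdv : degVec v = 0 := by rw [← hbal, h0, degVec_zero]
    have hmv : mass v = 0 := by
      have := sum_degVec v
      rw [hdv] at this
      simp only [Finsupp.sum_zero_index] at this
      omega
    rw [h0, mass_eq_zero hmv]
  obtain ⟨L, x, ed, hL0, hLe, hed, hxL, hU, hV⟩ := euler_exists u v hbal hune hprim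
  have hmassL : mass u + mass v = L := by
    have h := mass_segU_add_mass_segW ed 0 L
    rw [hU, hV] at h
    omega
  have hmuv : mass u = mass v := mass_eq_of_degVec_eq hbal
  have hUsup : ∀ t, t < L → Even t → (ed t) ∈ u.support := by
    intro t ht hev
    rw [← hU, segU, Finsupp.mem_support_iff]
    have := one_le_susum_apply (ed := ed) (mem_evens.mpr ⟨⟨Nat.zero_le t, ht⟩, hev⟩)
    omega
  have hVsup : ∀ t, t < L → ¬ Even t → (ed t) ∈ v.support := by
    intro t ht hev
    rw [← hV, segW, Finsupp.mem_support_iff]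
    have := one_le_susum_apply (ed := ed) (mem_odds.mpr ⟨⟨Nat.zero_le t, ht⟩, hev⟩)
    omega
  have hedSym : ∀ t₁ t₂, t₁ < L → t₂ < L → Even t₁ → ¬ Even t₂ →
      (ed t₁ : Sym2 V) ≠ (ed t₂ : Sym2 V) := by
    intro t₁ t₂ h1 h2 he ho heq
    exact hdisj (ed t₁) ⟨hUsup t₁ h1 he, Subtype.ext heq ▸ hVsup t₂ h2 ho⟩
  have hV1 : ∀ t, t < L → x t ≠ x (t + 1) := by
    intro t ht heq
    have hadj : (ed t : Sym2 V) ∈ G.edgeSet := (ed t).2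
    rw [hed t ht, SimpleGraph.mem_edgeSet] at hadj
    exact G.ne_of_adj hadj heq
  have hL2 : L ≠ 2 := by
    intro h2
    refine hedSym 0 1 (by omega) (by omega) Even.zero (by simp) ?_
    rw [hed 0 (by omega), hed 1 (by omega)]
    have hx2 : x (1 + 1) = x 0 := by
      rw [show (1 : ℕ) + 1 = L from h2.symm, hxL]
    rw [hx2]
    exact Sym2.eq_swap
  have hL4 : 4 ≤ L := by
    obtain ⟨c, hc⟩ := hLe
    omega
  have hV2 : ∀ t, t + 2 ≤ L → x t ≠ x (t + 2) := by
    intro t ht heq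
    have h1 : (ed t : Sym2 V) = (ed (t + 1) : Sym2 V) := by
      rw [hed t (by omega), hed (t + 1) (by omega)]
      rw [show t + 1 + 1 = t + 2 from rfl, heq]
      exact Sym2.eq_swap
    by_cases hev : Even t
    · exact hedSym t (t + 1) (by omega) (by omega) hev
        (by rw [Nat.even_add_one]; exact not_not_intro hev) h1
    · exact hedSym (t + 1) t (by omega) (by omega)
        (by rw [Nat.even_add_one]; exact hev) hev h1.symm
  -- the cyclic word of visited vertices
  set wd : ℕ → V := fun k => x (k % L) with hwd
  have hper : ∀ k, wd (k + L) = wd k := by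
    intro k
    simp only [hwd, Nat.add_mod_right]
  have hwdlt : ∀ k, k < L → wd k = x k := by
    intro k hk
    simp only [hwd, Nat.mod_eq_of_lt hk]
  have hmod1 : ∀ k, (k + 1) % L = (k % L + 1) % L := by
    intro k
    conv_lhs => rw [Nat.add_mod, Nat.mod_eq_of_lt (show 1 < L by omega)]
  have hmod2 : ∀ k, (k + 2) % L = (k % L + 2) % L := by
    intro k
    conv_lhs => rw [Nat.add_mod, Nat.mod_eq_of_lt (show 2 < L by omega)]
  have hw1 : ∀ k, wd k ≠ wd (k + 1) := by
    intro k
    have hkL : k % L < L := Nat.mod_lt k (by omega)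
    by_cases hk : k % L + 1 = L
    · have e2 : wd (k + 1) = x 0 := by
        show x ((k + 1) % L) = x 0
        rw [hmod1, hk, Nat.mod_self]
      rw [e2]
      intro heq
      apply hV1 (k % L) hkL
      show x (k % L) = x (k % L + 1)
      rw [hk, hxL]
      exact heq
    · have e2 : wd (k + 1) = x (k % L + 1) := by
        show x ((k + 1) % L) = _
        rw [hmod1, Nat.mod_eq_of_lt (by omega)]
      rw [e2]
      exact hV1 (k % L) hkL
  have hw2 : ∀ k, wd k ≠ wd (k + 2) := by
    intro k
    have hkL : k % L < L := Nat.mod_lt k (by omega)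
    rcases (by omega : k % L + 2 < L ∨ k % L + 2 = L ∨ k % L + 2 = L + 1) with hc | hc | hc
    · have e2 : wd (k + 2) = x (k % L + 2) := by
        show x ((k + 2) % L) = _
        rw [hmod2, Nat.mod_eq_of_lt hc]
      rw [e2]
      exact hV2 (k % L) (by omega)
    · have e2 : wd (k + 2) = x 0 := by
        show x ((k + 2) % L) = x 0
        rw [hmod2, hc, Nat.mod_self]
      rw [e2]
      intro heq
      apply hV2 (k % L) (by omega)
      show x (k % L) = x (k % L + 2)
      rw [hc, hxL]
      exact heq
    · -- k % L = L - 1; claim x (L-1) ≠ x 1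
      have hk1 : k % L = L - 1 := by omega
      have e2 : wd (k + 2) = x 1 := by
        show x ((k + 2) % L) = x 1
        rw [hmod2, hc]
        congr 1
        rw [Nat.add_mod_left L 1, Nat.mod_eq_of_lt (by omega)]
      rw [e2]
      show x (k % L) ≠ x 1
      rw [hk1]
      intro heq
      refine hedSym 0 (L - 1) (by omega) (by omega) Even.zero ?_ ?_
      · intro hevL
        have : Even L := hLe
        obtain ⟨c, hcc⟩ := this
        obtain ⟨d, hd⟩ := hevL
        omega
      · rw [hed 0 (by omega), hed (L - 1) (by omega)]
        have hxLL : x (L - 1 + 1) = x 0 := by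
          rw [show L - 1 + 1 = L by omega, hxL]
        rw [hxLL, ← heq]
        exact Sym2.eq_swap
  -- same-parity coincidences are impossible (surgery)
  have hw3x : ∀ k l, k < l → l < L → x k = x l → ¬ Even (l - k) := by
    intro k l hkl hlL hxkl hev
    have hbalseg : degVec (segU ed k l) = degVec (segW ed k l) := by
      ext y
      have h1 := seg_balance (x := x) (ed := ed) (le_of_lt hkl)
        (fun t _ h2 => hed t (by omega)) y
      have hsign : ((-1 : ℤ)) ^ l = (-1) ^ k := by
        obtain ⟨c, hc⟩ := hev
        rw [show l = k + (c + c) by omega, pow_add,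
          Even.neg_one_pow ⟨c, rfl⟩, mul_one]
      rw [hsign, hxkl] at h1
      have h2 : (degVec (segU ed k l) y : ℤ) = degVec (segW ed k l) y := by linarith
      exact_mod_cast h2
    have hsU : segU ed k l ≤ u := by
      rw [← hU, segU, segU]
      apply susum_mono
      intro t ht
      obtain ⟨⟨_, ht2⟩, ht3⟩ := mem_evens.mp ht
      exact mem_evens.mpr ⟨⟨Nat.zero_le t, by omega⟩, ht3⟩
    have hsW : segW ed k l ≤ v := by
      rw [← hV, segW, segW]
      apply susum_mono
      intro t ht
      obtain ⟨⟨_, ht2⟩, ht3⟩ := mem_odds.mp ht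
      exact mem_odds.mpr ⟨⟨Nat.zero_le t, by omega⟩, ht3⟩
    have hm := mass_segU_add_mass_segW ed k l
    rcases hprim _ _ hbalseg hsU hsW with ⟨hA0, hB0⟩ | ⟨hA1, hB1⟩
    · rw [hA0, hB0, mass_zero] at hm
      omega
    · rw [hA1, hB1] at hm
      omega
  have hw3 : ∀ k l, k < l → l < L → wd k = wd l → ¬ Even (l - k) := by
    intro k l hkl hlL hweq
    rw [hwdlt k (by omega), hwdlt l hlL] at hweq
    exact hw3x k l hkl hlL hweq
  -- non-crossing (double surgery)
  have hw4 : ∀ k p l r, k < p → p < l → l < r → r < L →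
      wd k = wd l → wd p = wd r → False := by
    intro k p l r hkp hpl hlr hrL hkl hpr
    rw [hwdlt k (by omega), hwdlt l (by omega)] at hkl
    rw [hwdlt p (by omega), hwdlt r (by omega)] at hpr
    have hod1 : ¬ Even (l - k) := hw3x k l (by omega) (by omega) hkl
    have hod2 : ¬ Even (r - p) := hw3x p r (by omega) hrL hpr
    have hsign1 : ((-1 : ℤ)) ^ l = -(-1) ^ k := by
      obtain ⟨c, hc⟩ := Nat.not_even_iff_odd.mp hod1
      rw [show l = k + (2 * c + 1) by omega, pow_add,
        Odd.neg_one_pow (odd_two_mul_add_one c)]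
      ring
    have hsign2 : ((-1 : ℤ)) ^ r = -(-1) ^ p := by
      obtain ⟨c, hc⟩ := Nat.not_even_iff_odd.mp hod2
      rw [show r = p + (2 * c + 1) by omega, pow_add,
        Odd.neg_one_pow (odd_two_mul_add_one c)]
      ring
    have hbalseg : degVec (segU ed k p + segU ed l r)
        = degVec (segW ed k p + segW ed l r) := by
      ext y
      have h1 := seg_balance (x := x) (ed := ed) (le_of_lt hkp)
        (fun t _ h2 => hed t (by omega)) y
      have h2 := seg_balance (x := x) (ed := ed) (le_of_lt hlr)
        (fun t _ h2 => hed t (by omega)) y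
      rw [← hkl, ← hpr, hsign1, hsign2] at h2
      rw [degVec_add, degVec_add, Finsupp.add_apply, Finsupp.add_apply]
      have h3 : ((degVec (segU ed k p) y + degVec (segU ed l r) y : ℕ) : ℤ)
          = ((degVec (segW ed k p) y + degVec (segW ed l r) y : ℕ) : ℤ) := by
        push_cast
        linarith
      exact_mod_cast h3
    have hdisjU : Disjoint (evens k p) (evens l r) := by
      rw [Finset.disjoint_left]
      intro t ht1 ht2
      obtain ⟨⟨_, h1'⟩, _⟩ := mem_evens.mp ht1
      obtain ⟨⟨h2', _⟩, _⟩ := mem_evens.mp ht2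
      omega
    have hdisjW : Disjoint (odds k p) (odds l r) := by
      rw [Finset.disjoint_left]
      intro t ht1 ht2
      obtain ⟨⟨_, h1'⟩, _⟩ := mem_odds.mp ht1
      obtain ⟨⟨h2', _⟩, _⟩ := mem_odds.mp ht2
      omega
    have hsU : segU ed k p + segU ed l r ≤ u := by
      rw [← hU]
      have e1 : segU ed k p + segU ed l r = susum ed (evens k p ∪ evens l r) :=
        (Finset.sum_union hdisjU).symm
      rw [e1, segU]
      apply susum_mono
      intro t ht
      rcases Finset.mem_union.mp ht with h | h
      · obtain ⟨⟨_, h2'⟩, h3'⟩ := mem_evens.mp h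
        exact mem_evens.mpr ⟨⟨Nat.zero_le t, by omega⟩, h3'⟩
      · obtain ⟨⟨_, h2'⟩, h3'⟩ := mem_evens.mp h
        exact mem_evens.mpr ⟨⟨Nat.zero_le t, by omega⟩, h3'⟩
    have hsW : segW ed k p + segW ed l r ≤ v := by
      rw [← hV]
      have e1 : segW ed k p + segW ed l r = susum ed (odds k p ∪ odds l r) :=
        (Finset.sum_union hdisjW).symm
      rw [e1, segW]
      apply susum_mono
      intro t ht
      rcases Finset.mem_union.mp ht with h | h
      · obtain ⟨⟨_, h2'⟩, h3'⟩ := mem_odds.mp h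
        exact mem_odds.mpr ⟨⟨Nat.zero_le t, by omega⟩, h3'⟩
      · obtain ⟨⟨_, h2'⟩, h3'⟩ := mem_odds.mp h
        exact mem_odds.mpr ⟨⟨Nat.zero_le t, by omega⟩, h3'⟩
    have hm1 := mass_segU_add_mass_segW ed k p
    have hm2 := mass_segU_add_mass_segW ed l r
    rcases hprim _ _ hbalseg hsU hsW with ⟨hA0, hB0⟩ | ⟨hA1, hB1⟩
    · have z1 : mass (segU ed k p) + mass (segU ed l r) = 0 := by
        rw [← mass_add, hA0, mass_zero]
      have z2 : mass (segW ed k p) + mass (segW ed l r) = 0 := by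
        rw [← mass_add, hB0, mass_zero]
      omega
    · have z1 : mass (segU ed k p) + mass (segU ed l r) = mass u := by
        rw [← mass_add, hA1]
      have z2 : mass (segW ed k p) + mass (segW ed l r) = mass v := by
        rw [← mass_add, hB1]
      omega
  -- apply the word bound
  have hwb := word_bound hL4 wd hper hw1 hw2 hw3 hw4
  have himg : ((Finset.range L).image wd).card ≤ Fintype.card V :=
    (Finset.card_le_univ _).trans_eq Finset.card_univ
  omega

end Final

/-- For a finite simple connected graph `G` with `m ≥ 4` vertices, every
binomial in the universal Gröbner basis of `I_G` has total degree at most `m - 2`. -/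
theorem degree_le_of_mem_universalGB {V : Type*} [Fintype V] (G : SimpleGraph V)
    (hG : G.Connected) (m : ℕ) (hm : Fintype.card V = m) (h4 : 4 ≤ m)
    (K : Type*) [Field K] :
    ∀ f ∈ UniversalGB (graphToricIdeal K G), f.totalDegree ≤ m - 2 := by
  intro f hf
  obtain ⟨u, v, hneUV, hdv, hdisj, hprim, htd⟩ := UGB_structure hf
  have hb := comb_bound u v hdv hneUV hdisj hprim
  rw [htd]
  omega

end
end
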